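/- arXiv:0901.0246 — 6 statements merged into one kernel-verified Lean document; each statement's English description precedes it below -/
import Mathlib

section
/- Let d ≥ 1 and let P_n denote the n-step transition probabilities of the simple random walk on Z^d with holding. Then for all integers n ≥ 1 and all x ∈ Z^d, P_n(x) ≤ 2d · exp(−|x|²/(2dn)). -/
open scoped BigOperators

/-- Euclidean norm of a lattice point in `ℤ^d`. -/
noncomputable def latNorm {d : ℕ} (x : Fin d → ℤ) : ℝ :=
  Real.sqrt (∑ i, ((x i : ℝ)) ^ 2)

/-- Coercion of a lattice point to a real vector. -/
def toRealVec {d : ℕ} (x : Fin d → ℤ) : Fin d → ℝ := fun i => (x i : ℝ)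

/-- One-step transition kernel of the simple random walk on `ℤ^d` with holding. -/
noncomputable def srwStep (d : ℕ) (x : Fin d → ℤ) : ℝ :=
  if latNorm x ≤ 1 then 1 / (2 * (d : ℝ) + 1) else 0

/-- `n`-step transition probabilities of the simple random walk on `ℤ^d` with holding,
defined by convolution powers with `P₀ = δ₀`. -/
noncomputable def srwP (d : ℕ) : ℕ → (Fin d → ℤ) → ℝ
  | 0 => fun x => if x = 0 then 1 else 0
  | n + 1 => fun x => ∑' y : Fin d → ℤ, srwP d n y * srwStep d (x - y)

/-- The Gaussian (heat) kernel on `ℝ^d`: `φ_t(x) = (2πt)^{-d/2} exp(-|x|²/(2t))`. -/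
noncomputable def gauss (d : ℕ) (t : ℝ) (x : Fin d → ℝ) : ℝ :=
  (2 * Real.pi * t) ^ (-(d : ℝ) / 2) * Real.exp (-(∑ i, (x i) ^ 2) / (2 * t))

/-- support of the one-step kernel -/
noncomputable def srwSupp (d : ℕ) : Finset (Fin d → ℤ) :=
  insert 0 ((Finset.univ.image fun j : Fin d => Pi.single j (1:ℤ)) ∪
    (Finset.univ.image fun j : Fin d => Pi.single j (-1:ℤ)))

lemma mem_srwSupp_of_norm_le {d : ℕ} {z : Fin d → ℤ} (h : latNorm z ≤ 1) :
    z ∈ srwSupp d := by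
  have hs0 : (0:ℝ) ≤ ∑ i, ((z i : ℝ)) ^ 2 := Finset.sum_nonneg fun i _ => sq_nonneg _
  have hsum : (∑ i, ((z i : ℝ)) ^ 2) ≤ 1 := by
    have := Real.sq_sqrt hs0
    have h1 : Real.sqrt (∑ i, ((z i : ℝ)) ^ 2) ≤ 1 := h
    nlinarith [Real.sqrt_nonneg (∑ i, ((z i : ℝ)) ^ 2)]
  have hz : (∑ i, (z i) ^ 2 : ℤ) ≤ 1 := by exact_mod_cast (by push_cast; exact hsum : ((∑ i, (z i) ^ 2 : ℤ) : ℝ) ≤ 1)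
  by_cases hz0 : z = 0
  · simp [srwSupp, hz0]
  · obtain ⟨j, hj⟩ : ∃ j, z j ≠ 0 := by
      by_contra hc
      push_neg at hc
      exact hz0 (funext hc)
    have hj1 : 1 ≤ (z j) ^ 2 := by
      rcases lt_or_gt_of_ne hj with h' | h' <;> nlinarith
    have hother : ∀ k, k ≠ j → z k = 0 := by
      intro k hk
      by_contra hk0
      have hk1 : 1 ≤ (z k) ^ 2 := by
        rcases lt_or_gt_of_ne hk0 with h' | h' <;> nlinarith
      have hkmem : k ∈ Finset.univ.erase j := Finset.mem_erase.2 ⟨hk, Finset.mem_univ k⟩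
      have hk2 : (z k) ^ 2 ≤ ∑ i ∈ Finset.univ.erase j, (z i) ^ 2 :=
        Finset.single_le_sum (fun i _ => sq_nonneg (z i)) hkmem
      have hsplit : (z j) ^ 2 + ∑ i ∈ Finset.univ.erase j, (z i) ^ 2 = ∑ i, (z i) ^ 2 :=
        Finset.add_sum_erase Finset.univ (fun i => (z i) ^ 2) (Finset.mem_univ j)
      linarith
    have hzj2 : (z j) ^ 2 = 1 := by
      have : (z j) ^ 2 ≤ ∑ i, (z i) ^ 2 :=
        Finset.single_le_sum (fun i _ => sq_nonneg (z i)) (Finset.mem_univ j)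
      linarith
    have hzj : z j = 1 ∨ z j = -1 := by
      have : (z j - 1) * (z j + 1) = 0 := by linear_combination hzj2
      rcases mul_eq_zero.1 this with h' | h' <;> [left; right] <;> omega
    have hzeq : z = Pi.single j (z j) := by
      funext k
      by_cases hk : k = j
      · subst hk; simp
      · rw [Pi.single_apply, if_neg hk, hother k hk]
    rcases hzj with h' | h'
    · rw [hzeq, h']
      simp [srwSupp]
    · rw [hzeq, h']
      simp [srwSupp]

lemma srwStep_eq_zero_of_notMem {d : ℕ} {z : Fin d → ℤ} (h : z ∉ srwSupp d) :
    srwStep d z = 0 := by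
  rw [srwStep, if_neg]
  intro hle
  exact h (mem_srwSupp_of_norm_le hle)

lemma srwStep_of_mem {d : ℕ} {z : Fin d → ℤ} (h : z ∈ srwSupp d) :
    srwStep d z = 1 / (2 * (d : ℝ) + 1) := by
  rw [srwStep, if_pos]
  have key : ∀ (j : Fin d) (c : ℤ), c = 1 ∨ c = -1 → latNorm (Pi.single j c) ≤ 1 := by
    intro j c hc
    have : (∑ i, (((Pi.single j c : Fin d → ℤ) i : ℝ)) ^ 2) = 1 := by
      have : ∀ i : Fin d, (((Pi.single j c : Fin d → ℤ) i : ℝ)) ^ 2 = if i = j then 1 else 0 := by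
        intro i
        rw [Pi.single_apply]
        rcases hc with h' | h' <;> subst h' <;> split <;> norm_num
      rw [Finset.sum_congr rfl fun i _ => this i]
      simp
    rw [latNorm, this, Real.sqrt_one]
  simp only [srwSupp, Finset.mem_insert, Finset.mem_union, Finset.mem_image,
    Finset.mem_univ, true_and] at h
  rcases h with h | ⟨j, hj⟩ | ⟨j, hj⟩
  · subst h; simp [latNorm]
  · rw [← hj]; exact key j 1 (Or.inl rfl)
  · rw [← hj]; exact key j (-1) (Or.inr rfl)

lemma srwP_succ (d n : ℕ) (x : Fin d → ℤ) :
    srwP d (n+1) x = ∑ z ∈ srwSupp d, srwP d n (x - z) * (1 / (2 * (d:ℝ) + 1)) := by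
  show (∑' y : Fin d → ℤ, srwP d n y * srwStep d (x - y)) = _
  rw [tsum_eq_sum (s := (srwSupp d).image (fun z => x - z))]
  · rw [Finset.sum_image (by intro a _ b _ h; have : x - a = x - b := h; exact sub_right_injective this)]
    refine Finset.sum_congr rfl fun z hz => ?_
    rw [sub_sub_cancel, srwStep_of_mem hz]
  · intro y hy
    rw [srwStep_eq_zero_of_notMem, mul_zero]
    intro hmem
    apply hy
    refine Finset.mem_image.2 ⟨x - y, hmem, ?_⟩
    rw [sub_sub_cancel]

lemma single_one_inj {d : ℕ} (c : ℤ) (hc : c ≠ 0) :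
    Function.Injective (fun j : Fin d => Pi.single j c) := by
  intro j k h
  by_contra hne
  have := congrFun h j
  simp only [Pi.single_apply] at this
  rw [if_pos trivial, if_neg hne] at this
  exact hc this

lemma sum_exp_single {d : ℕ} (i : Fin d) (l : ℝ) (c : ℤ) :
    ∑ j : Fin d, Real.exp (l * (((Pi.single j c : Fin d → ℤ) i : ℤ) : ℝ))
      = Real.exp (l * c) + ((d : ℝ) - 1) := by
  have : ∀ j : Fin d, Real.exp (l * (((Pi.single j c : Fin d → ℤ) i : ℤ) : ℝ))
      = (if i = j then Real.exp (l * c) - 1 else 0) + 1 := by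
    intro j
    rw [Pi.single_apply]
    split <;> simp_all
  rw [Finset.sum_congr rfl fun j _ => this j, Finset.sum_add_distrib,
    Finset.sum_ite_eq Finset.univ i (fun _ => Real.exp (l*c) - 1)]
  simp
  ring

lemma srwP_mgf (d : ℕ) (i : Fin d) (l : ℝ) :
    ∀ n (x : Fin d → ℤ), srwP d n x ≤ Real.exp ((n : ℝ) * l^2/2 - l * (x i)) := by
  intro n
  induction n with
  | zero =>
    intro x
    show (if x = 0 then (1:ℝ) else 0) ≤ _
    by_cases hx : x = 0
    · simp [hx]
    · rw [if_neg hx]; positivity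
  | succ n ih =>
    intro x
    rw [srwP_succ]
    have hd : 1 ≤ d := Nat.one_le_iff_ne_zero.2 (by rintro rfl; exact i.elim0)
    have hd1 : (1:ℝ) ≤ (d:ℝ) := by exact_mod_cast hd
    set c : ℝ := 1 / (2 * (d:ℝ) + 1) with hc
    have hc0 : (0:ℝ) ≤ c := by rw [hc]; positivity
    set E : ℝ := Real.exp ((n : ℝ) * l^2/2 - l * (x i)) with hE
    have step1 : ∀ z ∈ srwSupp d,
        srwP d n (x - z) * c ≤ (E * c) * Real.exp (l * ((z i : ℤ) : ℝ)) := by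
      intro z _
      have h1 : srwP d n (x - z) ≤ Real.exp ((n:ℝ) * l^2/2 - l * (((x - z) i : ℤ):ℝ)) := ih (x - z)
      have h2 : Real.exp ((n:ℝ) * l^2/2 - l * (((x - z) i : ℤ):ℝ))
          = E * Real.exp (l * ((z i : ℤ):ℝ)) := by
        rw [hE, ← Real.exp_add]
        congr 1
        have : (((x - z) i : ℤ):ℝ) = ((x i : ℤ):ℝ) - ((z i : ℤ):ℝ) := by
          push_cast [Pi.sub_apply]; ring
        rw [this]; ring
      calc srwP d n (x - z) * c ≤ Real.exp ((n:ℝ) * l^2/2 - l * (((x - z) i : ℤ):ℝ)) * c :=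
            mul_le_mul_of_nonneg_right h1 hc0
        _ = (E * c) * Real.exp (l * ((z i : ℤ):ℝ)) := by rw [h2]; ring
    have hsupp : ∑ z ∈ srwSupp d, Real.exp (l * ((z i : ℤ):ℝ))
        = 1 + (Real.exp l + ((d:ℝ) - 1)) + (Real.exp (-l) + ((d:ℝ) - 1)) := by
      have h0 : (0 : Fin d → ℤ) ∉ (Finset.univ.image fun j : Fin d => Pi.single j (1:ℤ)) ∪
          (Finset.univ.image fun j : Fin d => Pi.single j (-1:ℤ)) := by
        intro hmem
        rcases Finset.mem_union.1 hmem with h | h <;>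
        · obtain ⟨j, -, hj⟩ := Finset.mem_image.1 h
          have := congrFun hj j
          simp at this
      have hdisj : Disjoint (Finset.univ.image fun j : Fin d => Pi.single j (1:ℤ))
          (Finset.univ.image fun j : Fin d => Pi.single j (-1:ℤ)) := by
        rw [Finset.disjoint_left]
        intro z hz1 hz2
        obtain ⟨j, -, hj⟩ := Finset.mem_image.1 hz1
        obtain ⟨k, -, hk⟩ := Finset.mem_image.1 hz2
        have h1 := congrFun (hj.trans hk.symm) j
        rw [Pi.single_eq_same, Pi.single_apply] at h1
        split at h1 <;> omega
      rw [srwSupp, Finset.sum_insert h0, Finset.sum_union hdisj,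
        Finset.sum_image (g := fun j : Fin d => Pi.single j (1:ℤ))
          (fun a _ b _ h => single_one_inj (d := d) 1 one_ne_zero h),
        Finset.sum_image (g := fun j : Fin d => Pi.single j (-1:ℤ))
          (fun a _ b _ h => single_one_inj (d := d) (-1) (by norm_num) h),
        sum_exp_single, sum_exp_single]
      norm_num
      ring
    have hsum_le : ∑ z ∈ srwSupp d, Real.exp (l * ((z i : ℤ):ℝ))
        ≤ (2 * (d:ℝ) + 1) * Real.exp (l^2/2) := by
      rw [hsupp]
      have hcosh := Real.cosh_le_exp_half_sq l
      have hcosh2 : Real.exp l + Real.exp (-l) ≤ 2 * Real.exp (l^2/2) := by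
        rw [Real.cosh_eq] at hcosh; linarith
      have hone : (1:ℝ) ≤ Real.exp (l^2/2) := Real.one_le_exp (by positivity)
      nlinarith [Real.exp_pos (l^2/2)]
    calc ∑ z ∈ srwSupp d, srwP d n (x - z) * c
        ≤ ∑ z ∈ srwSupp d, (E * c) * Real.exp (l * ((z i : ℤ):ℝ)) :=
          Finset.sum_le_sum step1
      _ = (E * c) * ∑ z ∈ srwSupp d, Real.exp (l * ((z i : ℤ):ℝ)) := by
          rw [← Finset.mul_sum]
      _ ≤ (E * c) * ((2 * (d:ℝ) + 1) * Real.exp (l^2/2)) := by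
          have hEc : 0 ≤ E * c := mul_nonneg (Real.exp_nonneg _) hc0
          exact mul_le_mul_of_nonneg_left hsum_le hEc
      _ = E * Real.exp (l^2/2) * (c * (2 * (d:ℝ) + 1)) := by ring
      _ = E * Real.exp (l^2/2) := by
          rw [hc, one_div, inv_mul_cancel₀ (by positivity), mul_one]
      _ = Real.exp ((↑(n+1) : ℝ) * l^2/2 - l * (x i)) := by
          rw [hE, ← Real.exp_add]
          congr 1
          push_cast
          ring

/-- Hoeffding bound `P_n(x) ≤ 2d · exp(−|x|²/(2dn))`. -/
theorem srwP_le_hoeffding (d : ℕ) (hd : 1 ≤ d) (n : ℕ) (hn : 1 ≤ n) (x : Fin d → ℤ) :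
    srwP d n x ≤ 2 * (d : ℝ) * Real.exp (-(∑ i, ((x i : ℝ)) ^ 2) / (2 * d * n)) := by
  have hd0 : (1:ℝ) ≤ (d:ℝ) := by exact_mod_cast hd
  have hn0 : (0:ℝ) < (n:ℝ) := by exact_mod_cast hn
  obtain ⟨i, -, hi⟩ := Finset.exists_max_image Finset.univ (fun j => ((x j : ℝ))^2)
    ⟨⟨0, hd⟩, Finset.mem_univ _⟩
  have key := srwP_mgf d i (((x i : ℤ):ℝ)/n) n x
  have heq : (n:ℝ) * (((x i : ℤ):ℝ)/n)^2/2 - (((x i : ℤ):ℝ)/n) * ((x i : ℤ):ℝ)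
      = -(((x i : ℤ):ℝ)^2) / (2*(n:ℝ)) := by
    field_simp
    ring
  rw [heq] at key
  have hsum : (∑ j, ((x j : ℝ))^2) ≤ (d:ℝ) * ((x i : ℤ):ℝ)^2 := by
    calc (∑ j, ((x j : ℝ))^2) ≤ ∑ _j : Fin d, ((x i : ℝ))^2 :=
          Finset.sum_le_sum (fun j _ => hi j (Finset.mem_univ j))
      _ = (d:ℝ) * ((x i : ℤ):ℝ)^2 := by
          rw [Finset.sum_const, Finset.card_univ, Fintype.card_fin, nsmul_eq_mul]
  have hmono : -(((x i : ℤ):ℝ)^2) / (2*(n:ℝ)) ≤ -(∑ j, ((x j : ℝ))^2) / (2*(d:ℝ)*(n:ℝ)) := by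
    rw [neg_div, neg_div, neg_le_neg_iff, div_le_div_iff₀ (by positivity) (by positivity)]
    nlinarith
  calc srwP d n x ≤ Real.exp (-(((x i : ℤ):ℝ)^2) / (2*(n:ℝ))) := key
    _ ≤ Real.exp (-(∑ j, ((x j : ℝ))^2) / (2*(d:ℝ)*(n:ℝ))) := Real.exp_le_exp.2 hmono
    _ ≤ 2 * (d:ℝ) * Real.exp (-(∑ j, ((x j : ℝ))^2) / (2*(d:ℝ)*(n:ℝ))) :=
        le_mul_of_one_le_left (Real.exp_nonneg _) (by linarith)
end

section
/- Let d ≥ 1 and let P_n denote the n-step transition probabilities of the simple random walk on Z^d with holding, and let φ_n be the Gaussian kernel. Then there exists β₀ > 0 such that for every β ∈ (0, β₀] there is a constant C = C(β) > 0 with: for all integers n ≥ 1 and all x ∈ Z^d, P_n(x) ≤ C φ_n(βx). -/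
open scoped BigOperators

set_option maxHeartbeats 1000000

namespace SRW

variable {d : ℕ}

/-- The weight of each step. -/
noncomputable def W (d : ℕ) : ℝ := 1 / (2 * (d : ℝ) + 1)

lemma W_pos : 0 < W d := by
  have : (0:ℝ) < 2 * (d:ℝ) + 1 := by positivity
  simpa [W] using this

lemma W_le_one : W d ≤ 1 := by
  rw [W]
  rw [div_le_one (by positivity)]
  nlinarith [Nat.cast_nonneg (α := ℝ) d]

/-- The support of one step. -/
noncomputable def S (d : ℕ) : Finset (Fin d → ℤ) :=
  insert 0 ((Finset.univ.image fun i : Fin d => Pi.single i (1:ℤ)) ∪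
    (Finset.univ.image fun i : Fin d => Pi.single i (-1:ℤ)))

lemma single_ne_zero_fn (i : Fin d) {c : ℤ} (hc : c ≠ 0) :
    (Pi.single i c : Fin d → ℤ) ≠ 0 := by
  intro h
  have := congrFun h i
  rw [Pi.single_eq_same] at this
  exact hc (by simpa using this)

lemma single_eq_single_iff {i j : Fin d} {a b : ℤ} (ha : a ≠ 0)
    (h : (Pi.single i a : Fin d → ℤ) = Pi.single j b) : i = j ∧ a = b := by
  by_cases hij : i = j
  · subst hij
    have := congrFun h i
    rw [Pi.single_eq_same, Pi.single_eq_same] at this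
    exact ⟨rfl, this⟩
  · have := congrFun h i
    rw [Pi.single_eq_same, Pi.single_eq_of_ne hij] at this
    exact absurd this ha

lemma sum_S {M : Type*} [AddCommMonoid M] (f : (Fin d → ℤ) → M) :
    ∑ z ∈ S d, f z = f 0 + ∑ i, (f (Pi.single i 1) + f (Pi.single i (-1))) := by
  classical
  have h0 : (0 : Fin d → ℤ) ∉ ((Finset.univ.image fun i : Fin d => (Pi.single i (1:ℤ) : Fin d → ℤ)) ∪
      (Finset.univ.image fun i : Fin d => (Pi.single i (-1:ℤ) : Fin d → ℤ))) := by
    simp only [Finset.mem_union, Finset.mem_image, Finset.mem_univ, true_and]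
    rintro (⟨i, hi⟩ | ⟨i, hi⟩)
    · exact single_ne_zero_fn i (by norm_num) hi
    · exact single_ne_zero_fn i (by norm_num) hi
  have hdisj : Disjoint (Finset.univ.image fun i : Fin d => (Pi.single i (1:ℤ) : Fin d → ℤ))
      (Finset.univ.image fun i : Fin d => (Pi.single i (-1:ℤ) : Fin d → ℤ)) := by
    rw [Finset.disjoint_left]
    rintro a ha hb
    simp only [Finset.mem_image, Finset.mem_univ, true_and] at ha hb
    obtain ⟨i, hi⟩ := ha
    obtain ⟨j, hj⟩ := hb
    have := (single_eq_single_iff (by norm_num) (hi.trans hj.symm)).2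
    norm_num at this
  have key1 : ∑ z ∈ Finset.univ.image (fun i : Fin d => (Pi.single i (1:ℤ) : Fin d → ℤ)), f z
      = ∑ i, f (Pi.single i 1) :=
    Finset.sum_image (fun a _ b _ h => (single_eq_single_iff (by norm_num) h).1)
  have key2 : ∑ z ∈ Finset.univ.image (fun i : Fin d => (Pi.single i (-1:ℤ) : Fin d → ℤ)), f z
      = ∑ i, f (Pi.single i (-1)) :=
    Finset.sum_image (fun a _ b _ h => (single_eq_single_iff (by norm_num) h).1)
  rw [S, Finset.sum_insert h0, Finset.sum_union hdisj, key1, key2, ← Finset.sum_add_distrib]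

lemma latNorm_single (i : Fin d) (c : ℤ) : latNorm (Pi.single i c) = |(c:ℝ)| := by
  rw [latNorm]
  have : ∑ j, (((Pi.single i c : Fin d → ℤ) j : ℤ):ℝ)^2 = (c:ℝ)^2 := by
    rw [Finset.sum_eq_single i]
    · simp
    · intro j _ hj; simp [Pi.single_apply, hj]
    · simp
  rw [this, Real.sqrt_sq_eq_abs]

lemma step_eq_of_mem {z : Fin d → ℤ} (hz : z ∈ S d) : srwStep d z = W d := by
  rw [S] at hz
  simp only [Finset.mem_insert, Finset.mem_union, Finset.mem_image, Finset.mem_univ,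
    true_and] at hz
  have : latNorm z ≤ 1 := by
    rcases hz with rfl | ⟨i, hi⟩ | ⟨i, hi⟩
    · simp [latNorm]
    · rw [← hi, latNorm_single]; norm_num
    · rw [← hi, latNorm_single]; norm_num
  simp [srwStep, this, W]

lemma step_eq_zero {z : Fin d → ℤ} (hz : z ∉ S d) : srwStep d z = 0 := by
  rw [srwStep, if_neg]
  intro h
  -- from latNorm z ≤ 1 deduce z ∈ S d
  apply hz
  have hsum : ∑ j, ((z j : ℝ))^2 ≤ 1 := by
    have h0 : (0:ℝ) ≤ ∑ j, ((z j : ℝ))^2 := by positivity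
    have := Real.sqrt_le_sqrt (by norm_num : (1:ℝ) ≤ 1)
    nlinarith [Real.sq_sqrt h0, Real.sqrt_nonneg (∑ j, ((z j : ℝ))^2),
      (by simpa [latNorm] using h : Real.sqrt (∑ j, ((z j : ℝ))^2) ≤ 1)]
  -- integer sum
  have hsumZ : ∑ j, (z j)^2 ≤ 1 := by
    have : ((∑ j, (z j)^2 : ℤ) : ℝ) ≤ 1 := by push_cast; exact hsum
    exact_mod_cast this
  by_cases hz0 : z = 0
  · simp [S, hz0]
  · -- there is a coordinate i with z i ≠ 0
    have : ∃ i, z i ≠ 0 := by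
      by_contra hc; push_neg at hc; exact hz0 (funext fun i => hc i)
    obtain ⟨i, hi⟩ := this
    have h1 : 1 ≤ (z i)^2 := by nlinarith [sq_nonneg (z i), Int.one_le_abs hi, sq_abs (z i)]
    have hrest : ∀ j, j ≠ i → z j = 0 := by
      intro j hj
      by_contra hcj
      have h2 : 1 ≤ (z j)^2 := by nlinarith [Int.one_le_abs hcj, sq_abs (z j)]
      have : (2:ℤ) ≤ ∑ k, (z k)^2 := by
        calc (2:ℤ) = 1 + 1 := by ring
        _ ≤ (z i)^2 + (z j)^2 := add_le_add h1 h2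
        _ ≤ ∑ k, (z k)^2 := by
            rw [← Finset.sum_erase_add _ _ (Finset.mem_univ i),
              ← Finset.sum_erase_add _ _ (Finset.mem_erase.2 ⟨hj, Finset.mem_univ j⟩)]
            have : 0 ≤ ∑ k ∈ (Finset.univ.erase i).erase j, (z k)^2 :=
              Finset.sum_nonneg fun k _ => sq_nonneg _
            nlinarith
      omega
    have hzi2 : (z i)^2 = 1 := by
      have : (z i)^2 ≤ 1 := by
        calc (z i)^2 ≤ ∑ k, (z k)^2 :=
          Finset.single_le_sum (fun k _ => sq_nonneg (z k)) (Finset.mem_univ i)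
        _ ≤ 1 := hsumZ
      omega
    have : z i = 1 ∨ z i = -1 := by
      have hfac : (z i - 1) * (z i + 1) = 0 := by linear_combination hzi2
      rcases mul_eq_zero.1 hfac with h' | h'
      · left; linarith
      · right; linarith
    have hz' : z = Pi.single i (z i) := by
      funext j
      by_cases hji : j = i
      · subst hji; simp
      · simp [Pi.single_apply, hji, hrest j hji]
    simp only [S, Finset.mem_insert, Finset.mem_union, Finset.mem_image, Finset.mem_univ,
      true_and]
    rcases this with h' | h'
    · exact Or.inr (Or.inl ⟨i, by rw [hz', h']⟩)
    · exact Or.inr (Or.inr ⟨i, by rw [hz', h']⟩)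

lemma srwP_succ (n : ℕ) (x : Fin d → ℤ) :
    srwP d (n+1) x = ∑ z ∈ S d, W d * srwP d n (x - z) := by
  classical
  have h1 : srwP d (n+1) x = ∑' y : Fin d → ℤ, srwP d n y * srwStep d (x - y) := rfl
  rw [h1]
  rw [← (Equiv.subLeft x).tsum_eq (fun y => srwP d n y * srwStep d (x - y))]
  simp only [Equiv.subLeft_apply, sub_sub_cancel]
  rw [tsum_eq_sum (s := S d) (fun z hz => by rw [step_eq_zero hz, mul_zero])]
  exact Finset.sum_congr rfl fun z hz => by rw [step_eq_of_mem hz, mul_comm]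

lemma srwP_nonneg (n : ℕ) (x : Fin d → ℤ) : 0 ≤ srwP d n x := by
  induction n generalizing x with
  | zero => rw [srwP]; positivity
  | succ n ih =>
    rw [srwP_succ]
    exact Finset.sum_nonneg fun z _ => mul_nonneg W_pos.le (ih _)


/-- The box of radius `n`. -/
noncomputable def Box (d n : ℕ) : Finset (Fin d → ℤ) :=
  Fintype.piFinset fun _ : Fin d => Finset.Icc (-(n:ℤ)) n

lemma mem_Box_iff {n : ℕ} {x : Fin d → ℤ} : x ∈ Box d n ↔ ∀ i, |x i| ≤ n := by
  simp [Box, Fintype.mem_piFinset, abs_le, Finset.mem_Icc]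

lemma mem_S_abs {z : Fin d → ℤ} (hz : z ∈ S d) (i : Fin d) : |z i| ≤ 1 := by
  rw [S] at hz
  simp only [Finset.mem_insert, Finset.mem_union, Finset.mem_image, Finset.mem_univ,
    true_and] at hz
  rcases hz with rfl | ⟨j, hj⟩ | ⟨j, hj⟩ <;>
    first
      | simp
      | (rw [← hj]; by_cases h : i = j <;> simp [Pi.single_apply, h])

lemma srwP_eq_zero {n : ℕ} {x : Fin d → ℤ} (hx : x ∉ Box d n) : srwP d n x = 0 := by
  induction n generalizing x with
  | zero =>
    have h0 : srwP d 0 x = if x = 0 then 1 else 0 := rfl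
    rw [h0, if_neg]
    intro h; subst h
    exact hx (mem_Box_iff.2 (by simp))
  | succ n ih =>
    rw [srwP_succ]
    apply Finset.sum_eq_zero
    intro z hz
    rw [ih, mul_zero]
    intro hmem
    apply hx
    rw [mem_Box_iff] at hmem ⊢
    intro i
    have h1 := hmem i
    have h2 := mem_S_abs hz i
    have : x i - z i = (x - z) i := rfl
    push_cast
    calc |x i| = |(x i - z i) + z i| := by ring_nf
    _ ≤ |x i - z i| + |z i| := abs_add_le _ _
    _ ≤ n + 1 := by push_cast at h1; exact add_le_add h1 h2

lemma sum_eq_sum_box {n : ℕ} (g : (Fin d → ℤ) → ℝ) (F : Finset (Fin d → ℤ))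
    (hF : Box d n ⊆ F) :
    ∑ y ∈ F, srwP d n y * g y = ∑ y ∈ Box d n, srwP d n y * g y :=
  (Finset.sum_subset hF fun y _ hy => by rw [srwP_eq_zero hy, zero_mul]).symm

/-- The moment generating function of the walk. -/
lemma mgf (n : ℕ) (lam : Fin d → ℝ) :
    ∑ y ∈ Box d n, srwP d n y * Real.exp (∑ i, lam i * (y i : ℝ))
      = (W d * ∑ z ∈ S d, Real.exp (∑ i, lam i * (z i : ℝ)))^n := by
  classical
  induction n with
  | zero =>
    rw [pow_zero]
    rw [Finset.sum_eq_single (0 : Fin d → ℤ)]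
    · simp [srwP]
    · intro y _ hy
      have h0 : srwP d 0 y = if y = 0 then 1 else 0 := rfl
      rw [h0, if_neg hy, zero_mul]
    · intro h
      exact absurd (mem_Box_iff.2 (by simp)) h
  | succ n ih =>
    have expand : ∀ x : Fin d → ℤ, srwP d (n+1) x * Real.exp (∑ i, lam i * (x i : ℝ))
        = ∑ z ∈ S d, W d * (srwP d n (x - z) * Real.exp (∑ i, lam i * (x i : ℝ))) := by
      intro x
      rw [srwP_succ, Finset.sum_mul]
      exact Finset.sum_congr rfl fun z _ => by ring
    rw [Finset.sum_congr rfl fun x _ => expand x]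
    rw [Finset.sum_comm]
    have inner : ∀ z ∈ S d,
        ∑ x ∈ Box d (n+1), W d * (srwP d n (x - z) * Real.exp (∑ i, lam i * (x i : ℝ)))
        = W d * Real.exp (∑ i, lam i * (z i : ℝ))
            * (W d * ∑ z' ∈ S d, Real.exp (∑ i, lam i * (z' i : ℝ)))^n := by
      intro z hz
      have himg : ∑ x ∈ Box d (n+1), srwP d n (x - z) * Real.exp (∑ i, lam i * (x i : ℝ))
          = ∑ y ∈ (Box d (n+1)).image (fun x => x - z),
              srwP d n y * Real.exp (∑ i, lam i * ((y + z) i : ℝ)) := by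
        rw [Finset.sum_image (fun a _ b _ h => by
          have := congrArg (· + z) h; simpa using this)]
        exact Finset.sum_congr rfl fun x _ => by rw [sub_add_cancel]
      have hsub : Box d n ⊆ (Box d (n+1)).image (fun x => x - z) := by
        intro y hy
        rw [Finset.mem_image]
        refine ⟨y + z, ?_, by simp⟩
        rw [mem_Box_iff] at hy ⊢
        intro i
        have : (y + z) i = y i + z i := rfl
        rw [this]
        push_cast
        calc |y i + z i| ≤ |y i| + |z i| := abs_add_le _ _
        _ ≤ n + 1 := by
            have := hy i; push_cast at this
            exact add_le_add this (mem_S_abs hz i)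
      have hexp : ∀ y : Fin d → ℤ, Real.exp (∑ i, lam i * ((y + z) i : ℝ))
          = Real.exp (∑ i, lam i * (y i : ℝ)) * Real.exp (∑ i, lam i * (z i : ℝ)) := by
        intro y
        rw [← Real.exp_add, ← Finset.sum_add_distrib]
        congr 1
        refine Finset.sum_congr rfl fun i _ => ?_
        have : (y + z) i = y i + z i := rfl
        rw [this]; push_cast; ring
      calc ∑ x ∈ Box d (n+1), W d * (srwP d n (x - z) * Real.exp (∑ i, lam i * (x i : ℝ)))
          = W d * ∑ x ∈ Box d (n+1), srwP d n (x - z) * Real.exp (∑ i, lam i * (x i : ℝ)) := by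
            rw [Finset.mul_sum]
        _ = W d * ∑ y ∈ (Box d (n+1)).image (fun x => x - z),
              srwP d n y * Real.exp (∑ i, lam i * ((y + z) i : ℝ)) := by rw [himg]
        _ = W d * Real.exp (∑ i, lam i * (z i : ℝ))
              * ∑ y ∈ (Box d (n+1)).image (fun x => x - z),
                  srwP d n y * Real.exp (∑ i, lam i * (y i : ℝ)) := by
            simp only [Finset.mul_sum]
            refine Finset.sum_congr rfl fun y _ => ?_
            rw [hexp y]; ring
        _ = W d * Real.exp (∑ i, lam i * (z i : ℝ))
              * (W d * ∑ z' ∈ S d, Real.exp (∑ i, lam i * (z' i : ℝ)))^n := by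
            rw [sum_eq_sum_box _ _ hsub, ih]
    rw [Finset.sum_congr rfl inner, ← Finset.sum_mul, pow_succ]
    rw [Finset.mul_sum]
    ring

lemma exp_add_exp_neg_le {u : ℝ} (hu : |u| ≤ 1) :
    Real.exp u + Real.exp (-u) ≤ 2 + 4*u^2 := by
  have h1 := Real.exp_bound hu (n := 2) (by norm_num)
  have h2 := Real.exp_bound (x := -u) (by rwa [abs_neg]) (n := 2) (by norm_num)
  have e1 : ∑ m ∈ Finset.range 2, u ^ m / (m.factorial : ℝ) = 1 + u := by
    simp [Finset.sum_range_succ]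
  have e2 : ∑ m ∈ Finset.range 2, (-u) ^ m / (m.factorial : ℝ) = 1 - u := by
    simp [Finset.sum_range_succ, sub_eq_add_neg]
  rw [e1] at h1
  rw [e2] at h2
  norm_num [Nat.factorial] at h1 h2
  rw [abs_le] at h1 h2
  nlinarith [sq_abs u, h1.2, h2.2, sq_nonneg u]

lemma inner_single (i : Fin d) (c : ℝ) (y : Fin d → ℝ) :
    ∑ j, (Pi.single i c : Fin d → ℝ) j * y j = c * y i := by
  rw [Finset.sum_eq_single i]
  · rw [Pi.single_eq_same]
  · intro j _ hj
    rw [Pi.single_eq_of_ne hj, zero_mul]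
  · simp

lemma inner_single' (i : Fin d) (c : ℝ) (y : Fin d → ℤ) :
    ∑ j, (Pi.single i c : Fin d → ℝ) j * (y j : ℝ) = c * (y i : ℝ) :=
  inner_single i c (fun j => (y j : ℝ))

lemma sum_sq_single (i : Fin d) (c : ℝ) :
    ∑ j, ((Pi.single i c : Fin d → ℝ) j)^2 = c^2 := by
  rw [Finset.sum_eq_single i]
  · rw [Pi.single_eq_same]
  · intro j _ hj
    rw [Pi.single_eq_of_ne hj]; ring
  · simp

lemma psi_le (hd : 1 ≤ d) (lam : Fin d → ℝ) (hlam : ∀ i, |lam i| ≤ 1) :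
    W d * ∑ z ∈ S d, Real.exp (∑ i, lam i * (z i : ℝ))
      ≤ Real.exp (2 * ∑ i, (lam i)^2) := by
  rw [sum_S (f := fun z => Real.exp (∑ i, lam i * (z i : ℝ)))]
  have hz0 : Real.exp (∑ i, lam i * ((0 : Fin d → ℤ) i : ℝ)) = 1 := by
    simp
  have hterm : ∀ i : Fin d,
      Real.exp (∑ j, lam j * ((Pi.single i (1:ℤ) : Fin d → ℤ) j : ℝ))
        + Real.exp (∑ j, lam j * ((Pi.single i (-1:ℤ) : Fin d → ℤ) j : ℝ))
      ≤ 2 + 4*(lam i)^2 := by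
    intro i
    have c1 : ∑ j, lam j * ((Pi.single i (1:ℤ) : Fin d → ℤ) j : ℝ) = lam i := by
      rw [Finset.sum_eq_single i]
      · simp
      · intro j _ hj; rw [Pi.single_eq_of_ne hj]; simp
      · simp
    have c2 : ∑ j, lam j * ((Pi.single i (-1:ℤ) : Fin d → ℤ) j : ℝ) = -lam i := by
      rw [Finset.sum_eq_single i]
      · simp
      · intro j _ hj; rw [Pi.single_eq_of_ne hj]; simp
      · simp
    rw [c1, c2]
    exact exp_add_exp_neg_le (hlam i)
  have hsum : ∑ i, (Real.exp (∑ j, lam j * ((Pi.single i (1:ℤ) : Fin d → ℤ) j : ℝ))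
        + Real.exp (∑ j, lam j * ((Pi.single i (-1:ℤ) : Fin d → ℤ) j : ℝ)))
      ≤ ∑ i, (2 + 4*(lam i)^2) := Finset.sum_le_sum fun i _ => hterm i
  have hW : W d * (2*(d:ℝ)+1) = 1 := by
    rw [W]; field_simp
  have hWle : W d ≤ 1/2 := by
    rw [W, div_le_div_iff₀ (by positivity) (by norm_num)]
    have : (1:ℝ) ≤ (d:ℝ) := by exact_mod_cast hd
    linarith
  have hSsq : 0 ≤ ∑ i, (lam i)^2 := Finset.sum_nonneg fun i _ => sq_nonneg _
  calc W d * (Real.exp (∑ i, lam i * ((0 : Fin d → ℤ) i : ℝ))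
        + ∑ i, (Real.exp (∑ j, lam j * ((Pi.single i (1:ℤ) : Fin d → ℤ) j : ℝ))
          + Real.exp (∑ j, lam j * ((Pi.single i (-1:ℤ) : Fin d → ℤ) j : ℝ))))
      ≤ W d * (1 + ∑ i, (2 + 4*(lam i)^2)) := by
        apply mul_le_mul_of_nonneg_left _ W_pos.le
        rw [hz0]
        exact add_le_add (le_refl 1) hsum
    _ = 1 + 4 * W d * ∑ i, (lam i)^2 := by
        rw [Finset.sum_add_distrib, Finset.sum_const, Finset.card_univ, Fintype.card_fin,
          nsmul_eq_mul, ← Finset.mul_sum]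
        linear_combination hW
    _ ≤ 1 + 2 * ∑ i, (lam i)^2 := by
        have : 4 * W d * ∑ i, (lam i)^2 ≤ 2 * ∑ i, (lam i)^2 := by
          apply mul_le_mul_of_nonneg_right _ hSsq
          linarith
        linarith
    _ ≤ Real.exp (2 * ∑ i, (lam i)^2) := by
        have := Real.add_one_le_exp (2 * ∑ i, (lam i)^2)
        linarith

lemma chernoff (hd : 1 ≤ d) (N : ℕ) (lam : Fin d → ℝ) (hlam : ∀ i, |lam i| ≤ 1)
    (R : ℝ) (F : Finset (Fin d → ℤ)) (hF : ∀ y ∈ F, R ≤ ∑ i, lam i * (y i : ℝ)) :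
    ∑ y ∈ F, srwP d N y ≤ Real.exp (-R) * Real.exp (2*N*∑ i, (lam i)^2) := by
  classical
  have step1 : ∑ y ∈ F, srwP d N y
      ≤ Real.exp (-R) * ∑ y ∈ F, srwP d N y * Real.exp (∑ i, lam i * (y i : ℝ)) := by
    rw [Finset.mul_sum]
    apply Finset.sum_le_sum
    intro y hy
    have h1 : 1 ≤ Real.exp (-R) * Real.exp (∑ i, lam i * (y i : ℝ)) := by
      rw [← Real.exp_add]
      apply Real.one_le_exp
      linarith [hF y hy]
    calc srwP d N y = srwP d N y * 1 := by ring
      _ ≤ srwP d N y * (Real.exp (-R) * Real.exp (∑ i, lam i * (y i : ℝ))) :=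
          mul_le_mul_of_nonneg_left h1 (srwP_nonneg N y)
      _ = Real.exp (-R) * (srwP d N y * Real.exp (∑ i, lam i * (y i : ℝ))) := by ring
  have step2 : ∑ y ∈ F, srwP d N y * Real.exp (∑ i, lam i * (y i : ℝ))
      ≤ ∑ y ∈ F ∪ Box d N, srwP d N y * Real.exp (∑ i, lam i * (y i : ℝ)) := by
    apply Finset.sum_le_sum_of_subset_of_nonneg Finset.subset_union_left
    intro y _ _
    exact mul_nonneg (srwP_nonneg N y) (Real.exp_pos _).le
  have step3 : ∑ y ∈ F ∪ Box d N, srwP d N y * Real.exp (∑ i, lam i * (y i : ℝ))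
      = (W d * ∑ z ∈ S d, Real.exp (∑ i, lam i * (z i : ℝ)))^N := by
    rw [sum_eq_sum_box _ _ Finset.subset_union_right, mgf]
  have step4 : (W d * ∑ z ∈ S d, Real.exp (∑ i, lam i * (z i : ℝ)))^N
      ≤ Real.exp (2*N*∑ i, (lam i)^2) := by
    have hpos : 0 ≤ W d * ∑ z ∈ S d, Real.exp (∑ i, lam i * (z i : ℝ)) := by
      apply mul_nonneg W_pos.le
      exact Finset.sum_nonneg fun z _ => (Real.exp_pos _).le
    calc (W d * ∑ z ∈ S d, Real.exp (∑ i, lam i * (z i : ℝ)))^N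
        ≤ (Real.exp (2 * ∑ i, (lam i)^2))^N := pow_le_pow_left₀ hpos (psi_le hd lam hlam) N
      _ = Real.exp (2*N*∑ i, (lam i)^2) := by
          rw [← Real.exp_nat_mul]; ring_nf
  have hexpR : (0:ℝ) ≤ Real.exp (-R) := (Real.exp_pos _).le
  calc ∑ y ∈ F, srwP d N y
      ≤ Real.exp (-R) * ∑ y ∈ F, srwP d N y * Real.exp (∑ i, lam i * (y i : ℝ)) := step1
    _ ≤ Real.exp (-R) * Real.exp (2*N*∑ i, (lam i)^2) := by
        exact mul_le_mul_of_nonneg_left (step2.trans (step3.trans_le step4)) hexpR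

lemma tailP (hd : 1 ≤ d) {N : ℕ} (hN : 1 ≤ N) {R : ℝ} (hR : 0 ≤ R)
    (F : Finset (Fin d → ℤ)) (hF : ∀ y ∈ F, R ≤ ∑ i, ((y i : ℝ))^2) :
    ∑ y ∈ F, srwP d N y ≤ 2*(d:ℝ) * Real.exp (-R/(8*d*N)) := by
  classical
  set a : ℝ := Real.sqrt (R/d) with ha
  have hdpos : (0:ℝ) < d := by exact_mod_cast hd
  have hNpos : (0:ℝ) < N := by exact_mod_cast hN
  have ha_nonneg : 0 ≤ a := Real.sqrt_nonneg _
  have ha_sq : a^2 = R/d := Real.sq_sqrt (by positivity)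
  -- reduce to the box
  set F' : Finset (Fin d → ℤ) := F ∩ Box d N with hF'
  have hred : ∑ y ∈ F, srwP d N y = ∑ y ∈ F', srwP d N y := by
    symm
    apply Finset.sum_subset Finset.inter_subset_left
    intro y hy hy'
    exact srwP_eq_zero fun hbox => hy' (Finset.mem_inter.2 ⟨hy, hbox⟩)
  rw [hred]
  -- union bound
  have hunion : ∀ y ∈ F', srwP d N y ≤
      ∑ i, ((if a ≤ (y i : ℝ) then srwP d N y else 0)
        + (if a ≤ -(y i : ℝ) then srwP d N y else 0)) := by
    intro y hy
    have hyF : y ∈ F := (Finset.mem_inter.1 hy).1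
    have hex : ∃ i, a ≤ |(y i : ℝ)| := by
      by_contra hc
      push_neg at hc
      have hlt : ∀ i, ((y i:ℝ))^2 < R/d := by
        intro i
        have h1 := hc i
        have h2 : ((y i:ℝ))^2 = |(y i:ℝ)|^2 := (sq_abs _).symm
        rw [h2, ← ha_sq]
        exact pow_lt_pow_left₀ h1 (abs_nonneg _) (by norm_num)
      have : ∑ i, ((y i:ℝ))^2 < ∑ _i : Fin d, R/d := by
        apply Finset.sum_lt_sum_of_nonempty _ (fun i _ => hlt i)
        rw [Finset.univ_nonempty_iff]
        exact Fin.pos_iff_nonempty.1 hd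
      rw [Finset.sum_const, Finset.card_univ, Fintype.card_fin, nsmul_eq_mul] at this
      rw [mul_div_cancel₀ _ (ne_of_gt hdpos)] at this
      exact absurd (hF y hyF) (not_le.2 this)
    obtain ⟨i₀, hi₀⟩ := hex
    have key : srwP d N y ≤ (if a ≤ (y i₀ : ℝ) then srwP d N y else 0)
        + (if a ≤ -(y i₀ : ℝ) then srwP d N y else 0) := by
      rcases le_abs.1 hi₀ with h | h
      · rw [if_pos h]
        have : (0:ℝ) ≤ if a ≤ -(y i₀ : ℝ) then srwP d N y else 0 := by
          have := srwP_nonneg N y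
          split_ifs <;> linarith
        linarith
      · rw [if_pos h]
        have : (0:ℝ) ≤ if a ≤ (y i₀ : ℝ) then srwP d N y else 0 := by
          have := srwP_nonneg N y
          split_ifs <;> linarith
        linarith
    refine key.trans (Finset.single_le_sum (f := fun i =>
      (if a ≤ (y i : ℝ) then srwP d N y else 0) + (if a ≤ -(y i : ℝ) then srwP d N y else 0))
      (fun i _ => ?_) (Finset.mem_univ i₀))
    have h1 : (0:ℝ) ≤ if a ≤ (y i : ℝ) then srwP d N y else 0 := by
      have := srwP_nonneg N y
      split_ifs <;> linarith
    have h2 : (0:ℝ) ≤ if a ≤ -(y i : ℝ) then srwP d N y else 0 := by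
      have := srwP_nonneg N y
      split_ifs <;> linarith
    exact add_nonneg h1 h2
  -- bound each directional tail via Chernoff
  have hdir : ∀ (s : ℝ), s = 1 ∨ s = -1 → ∀ i : Fin d,
      ∑ y ∈ F'.filter (fun y => a ≤ s * (y i : ℝ)), srwP d N y
        ≤ Real.exp (-R/(8*d*N)) := by
    intro s hs i
    set G := F'.filter (fun y => a ≤ s * (y i : ℝ)) with hG
    rcases Finset.eq_empty_or_nonempty G with hGe | ⟨y₀, hy₀⟩
    · rw [hGe, Finset.sum_empty]
      positivity
    · -- a ≤ N
      have haN : a ≤ N := by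
        have h1 : a ≤ s * (y₀ i : ℝ) := (Finset.mem_filter.1 hy₀).2
        have h2 : y₀ ∈ Box d N := (Finset.mem_inter.1 (Finset.mem_filter.1 hy₀).1).2
        have h3 := mem_Box_iff.1 h2 i
        have h4 : |(y₀ i : ℝ)| ≤ N := by exact_mod_cast (by exact_mod_cast h3 : |(y₀ i : ℤ)| ≤ (N:ℤ))
        have h5 : s * (y₀ i : ℝ) ≤ |(y₀ i : ℝ)| := by
          rcases hs with rfl | rfl
          · rw [one_mul]; exact le_abs_self _
          · rw [neg_one_mul]; exact neg_le_abs _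
        linarith
      set a' : ℝ := a/(4*N) with ha'
      have ha'_nonneg : 0 ≤ a' := by positivity
      have ha'_le : a' ≤ 1 := by
        rw [ha', div_le_one (by positivity)]
        linarith
      have hcher := chernoff hd N (Pi.single i (s*a')) (fun j => by
        by_cases hji : j = i
        · subst hji
          rw [Pi.single_eq_same, abs_mul]
          rcases hs with rfl | rfl <;> simp [abs_of_nonneg ha'_nonneg, ha'_le]
        · rw [Pi.single_eq_of_ne hji]; norm_num)
        (a*a') G (fun y hy => by
          rw [inner_single']
          have h1 : a ≤ s * (y i : ℝ) := (Finset.mem_filter.1 hy).2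
          calc a * a' = a' * a := by ring
            _ ≤ a' * (s * (y i:ℝ)) := mul_le_mul_of_nonneg_left h1 ha'_nonneg
            _ = s * a' * (y i:ℝ) := by ring)
      rw [sum_sq_single] at hcher
      refine hcher.trans (le_of_eq ?_)
      rw [← Real.exp_add]
      congr 1
      have hsq : (s*a')^2 = a'^2 := by rcases hs with rfl | rfl <;> ring
      rw [hsq, ha']
      have hRa : (d:ℝ) * a^2 = R := by rw [ha_sq]; field_simp
      field_simp
      linear_combination (-16) * hRa
  -- put it together
  calc ∑ y ∈ F', srwP d N y
      ≤ ∑ y ∈ F', ∑ i, ((if a ≤ (y i : ℝ) then srwP d N y else 0)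
          + (if a ≤ -(y i : ℝ) then srwP d N y else 0)) := Finset.sum_le_sum hunion
    _ = ∑ i, ∑ y ∈ F', ((if a ≤ (y i : ℝ) then srwP d N y else 0)
          + (if a ≤ -(y i : ℝ) then srwP d N y else 0)) := Finset.sum_comm
    _ = ∑ i : Fin d, (∑ y ∈ F'.filter (fun y => a ≤ (y i : ℝ)), srwP d N y
          + ∑ y ∈ F'.filter (fun y => a ≤ -(y i : ℝ)), srwP d N y) := by
        refine Finset.sum_congr rfl fun i _ => ?_
        rw [Finset.sum_add_distrib, Finset.sum_filter, Finset.sum_filter]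
    _ ≤ ∑ _i : Fin d, (Real.exp (-R/(8*d*N)) + Real.exp (-R/(8*d*N))) := by
        apply Finset.sum_le_sum
        intro i _
        have d1 := hdir 1 (Or.inl rfl) i
        have d2 := hdir (-1) (Or.inr rfl) i
        simp only [one_mul] at d1
        simp only [neg_one_mul] at d2
        have d2' : ∑ y ∈ F'.filter (fun y => a ≤ -(y i:ℝ)), srwP d N y
            ≤ Real.exp (-R/(8*d*N)) := d2
        exact add_le_add d1 d2'
    _ = 2*(d:ℝ) * Real.exp (-R/(8*d*N)) := by
        rw [Finset.sum_const, Finset.card_univ, Fintype.card_fin, nsmul_eq_mul]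
        ring

lemma conv (n m : ℕ) (x : Fin d → ℤ) :
    srwP d (n+m) x = ∑ y ∈ Box d n, srwP d n y * srwP d m (x - y) := by
  classical
  induction m generalizing x with
  | zero =>
    have h0 : ∀ u : Fin d → ℤ, srwP d 0 u = if u = 0 then 1 else 0 := fun _ => rfl
    simp only [Nat.add_zero]
    have hstep : ∑ y ∈ Box d n, srwP d n y * srwP d 0 (x - y)
        = ∑ y ∈ Box d n, if x = y then srwP d n y else 0 := by
      refine Finset.sum_congr rfl fun y _ => ?_
      rw [h0, mul_ite, mul_one, mul_zero]
      simp only [sub_eq_zero]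
    rw [hstep, Finset.sum_ite_eq (Box d n) x (fun y => srwP d n y)]
    split_ifs with h
    · rfl
    · exact srwP_eq_zero h
  | succ m ih =>
    have hL : srwP d (n + (m+1)) x = ∑ z ∈ S d, W d * srwP d (n+m) (x - z) := by
      have : n + (m+1) = (n+m) + 1 := by ring
      rw [this, srwP_succ]
    rw [hL]
    have hinner : ∀ z ∈ S d, W d * srwP d (n+m) (x - z)
        = ∑ y ∈ Box d n, srwP d n y * (W d * srwP d m (x - y - z)) := by
      intro z _
      rw [ih (x - z), Finset.mul_sum]
      refine Finset.sum_congr rfl fun y _ => ?_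
      have : x - z - y = x - y - z := by ring
      rw [this]; ring
    rw [Finset.sum_congr rfl hinner, Finset.sum_comm]
    refine Finset.sum_congr rfl fun y _ => ?_
    rw [← Finset.mul_sum, srwP_succ]

/-! ### Fourier representation -/

/-- Fourier multiplier of one step. -/
noncomputable def phiF (d : ℕ) (θ : Fin d → ℝ) : ℝ := W d * (1 + 2 * ∑ i, Real.cos (θ i))

/-- The fundamental domain. -/
def boxF (d : ℕ) : Set (Fin d → ℝ) := Set.pi Set.univ fun _ : Fin d => Set.Icc (-Real.pi) Real.pi

/-- Indicator of the fundamental domain. -/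
noncomputable def chiF (d : ℕ) (θ : Fin d → ℝ) : ℝ :=
  (boxF d).indicator (fun _ => (1:ℝ)) θ

/-- One-dimensional indicator. -/
noncomputable def b1 (t : ℝ) : ℝ := (Set.Icc (-Real.pi) Real.pi).indicator (fun _ => (1:ℝ)) t

/-- The Fourier integrand. -/
noncomputable def Fker (d n : ℕ) (x : Fin d → ℤ) (θ : Fin d → ℝ) : ℂ :=
  ((chiF d θ * phiF d θ ^ n : ℝ) : ℂ)
    * Complex.exp (((∑ i, (x i : ℝ) * θ i : ℝ) : ℂ) * Complex.I)

lemma boxF_measurable : MeasurableSet (boxF d) :=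
  MeasurableSet.univ_pi fun _ => measurableSet_Icc

lemma boxF_compact : IsCompact (boxF d) :=
  isCompact_univ_pi fun _ => isCompact_Icc

lemma chiF_eq_one {θ : Fin d → ℝ} (h : θ ∈ boxF d) : chiF d θ = 1 := by
  rw [chiF, Set.indicator_of_mem h]

lemma chiF_eq_zero {θ : Fin d → ℝ} (h : θ ∉ boxF d) : chiF d θ = 0 := by
  rw [chiF, Set.indicator_of_notMem h]

lemma chiF_prod (θ : Fin d → ℝ) : chiF d θ = ∏ i, b1 (θ i) := by
  by_cases h : θ ∈ boxF d
  · rw [chiF_eq_one h]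
    symm
    apply Finset.prod_eq_one
    intro i _
    have : θ i ∈ Set.Icc (-Real.pi) Real.pi := h i (Set.mem_univ i)
    rw [b1, Set.indicator_of_mem this]
  · rw [chiF_eq_zero h]
    symm
    have : ∃ i, θ i ∉ Set.Icc (-Real.pi) Real.pi := by
      by_contra hc
      push_neg at hc
      exact h fun i _ => hc i
    obtain ⟨i, hi⟩ := this
    exact Finset.prod_eq_zero (Finset.mem_univ i) (by rw [b1, Set.indicator_of_notMem hi])

lemma Fker_eq_indicator (n : ℕ) (x : Fin d → ℤ) :
    Fker d n x = (boxF d).indicator (fun θ => ((phiF d θ ^ n : ℝ) : ℂ)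
      * Complex.exp (((∑ i, (x i : ℝ) * θ i : ℝ) : ℂ) * Complex.I)) := by
  funext θ
  by_cases h : θ ∈ boxF d
  · rw [Fker, chiF_eq_one h, Set.indicator_of_mem h, one_mul]
  · rw [Fker, chiF_eq_zero h, Set.indicator_of_notMem h, zero_mul]
    push_cast
    ring

lemma Fker_integrable (n : ℕ) (x : Fin d → ℤ) :
    MeasureTheory.Integrable (Fker d n x) := by
  rw [Fker_eq_indicator]
  apply MeasureTheory.IntegrableOn.integrable_indicator _ boxF_measurable
  apply ContinuousOn.integrableOn_compact boxF_compact
  apply Continuous.continuousOn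
  apply Continuous.mul
  · apply Continuous.comp Complex.continuous_ofReal
    apply Continuous.pow
    apply Continuous.mul continuous_const
    apply Continuous.add continuous_const
    apply Continuous.mul continuous_const
    exact continuous_finset_sum _ fun i _ => (Real.continuous_cos).comp (continuous_apply i)
  · apply Continuous.cexp
    apply Continuous.mul _ continuous_const
    apply Continuous.comp Complex.continuous_ofReal
    exact continuous_finset_sum _ fun i _ => continuous_const.mul (continuous_apply i)

lemma inner_single_int (i : Fin d) (c : ℤ) (θ : Fin d → ℝ) :
    ∑ j, (((Pi.single i c : Fin d → ℤ) j : ℤ) : ℝ) * θ j = ((c:ℤ):ℝ) * θ i := by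
  rw [Finset.sum_eq_single i]
  · rw [Pi.single_eq_same]
  · intro j _ hj
    rw [Pi.single_eq_of_ne hj]
    simp
  · simp

/-- The one-dimensional orthogonality integral. -/
lemma oneDim (k : ℤ) :
    ∫ t : ℝ, ((b1 t : ℝ) : ℂ) * Complex.exp ((((k:ℝ) * t : ℝ) : ℂ) * Complex.I)
      = if k = 0 then ((2*Real.pi : ℝ) : ℂ) else 0 := by
  have hfun : (fun t : ℝ => ((b1 t : ℝ) : ℂ) * Complex.exp ((((k:ℝ) * t : ℝ):ℂ) * Complex.I))
      = (Set.Icc (-Real.pi) Real.pi).indicator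
          (fun t => Complex.exp ((((k:ℝ) * t : ℝ):ℂ) * Complex.I)) := by
    funext t
    by_cases h : t ∈ Set.Icc (-Real.pi) Real.pi
    · rw [b1, Set.indicator_of_mem h, Set.indicator_of_mem h]
      norm_num
    · rw [b1, Set.indicator_of_notMem h, Set.indicator_of_notMem h]
      norm_num
  rw [hfun, MeasureTheory.integral_indicator measurableSet_Icc,
    MeasureTheory.integral_Icc_eq_integral_Ioc,
    ← intervalIntegral.integral_of_le (by linarith [Real.pi_pos] : -Real.pi ≤ Real.pi)]
  by_cases hk : k = 0
  · subst hk
    simp only [Int.cast_zero, zero_mul, Complex.ofReal_zero, Complex.exp_zero, if_pos]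
    rw [intervalIntegral.integral_const, Complex.real_smul]
    push_cast
    ring
  · rw [if_neg hk]
    have hexp : ∀ t : ℝ, Complex.exp ((((k:ℝ) * t : ℝ):ℂ) * Complex.I)
        = Complex.exp (((k:ℂ) * Complex.I) * (t:ℂ)) := by
      intro t
      congr 1
      push_cast
      ring
    rw [intervalIntegral.integral_congr (fun t _ => hexp t)]
    rw [integral_exp_mul_complex (by
      simp only [ne_eq, mul_eq_zero, Complex.I_ne_zero, or_false]
      exact_mod_cast hk)]
    have h1 : (k:ℂ) * Complex.I * (Real.pi : ℂ)
        = (k:ℂ) * Complex.I * ((-Real.pi : ℝ) : ℂ) + (k:ℂ) * (2 * (Real.pi:ℂ) * Complex.I) := by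
      push_cast
      ring
    rw [h1, Complex.exp_add, Complex.exp_int_mul_two_pi_mul_I, mul_one, sub_self, zero_div]

/-- Complex form of the Fourier multiplier. -/
lemma phiC (θ : Fin d → ℝ) :
    ((phiF d θ : ℝ) : ℂ)
      = ((W d : ℝ) : ℂ) * ∑ z ∈ S d,
          Complex.exp (((-(∑ i, ((z i : ℤ) : ℝ) * θ i) : ℝ) : ℂ) * Complex.I) := by
  rw [sum_S (f := fun z => Complex.exp (((-(∑ i, ((z i : ℤ) : ℝ) * θ i) : ℝ) : ℂ) * Complex.I))]
  have hz0 : Complex.exp (((-(∑ i, (((0 : Fin d → ℤ) i : ℤ) : ℝ) * θ i) : ℝ) : ℂ) * Complex.I)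
      = 1 := by
    simp
  have hpair : ∀ u : ℝ, Complex.exp (((-u : ℝ) : ℂ) * Complex.I)
      + Complex.exp ((u : ℂ) * Complex.I) = 2 * ((Real.cos u : ℝ) : ℂ) := by
    intro u
    rw [show ((-u : ℝ) : ℂ) = -(u:ℂ) by push_cast; ring]
    rw [Complex.exp_mul_I, Complex.exp_mul_I, Complex.cos_neg, Complex.sin_neg,
      ← Complex.ofReal_cos]
    ring
  have hterm : ∀ i : Fin d,
      Complex.exp (((-(∑ j, (((Pi.single i (1:ℤ) : Fin d → ℤ) j : ℤ) : ℝ) * θ j) : ℝ) : ℂ)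
          * Complex.I)
        + Complex.exp (((-(∑ j, (((Pi.single i (-1:ℤ) : Fin d → ℤ) j : ℤ) : ℝ) * θ j) : ℝ) : ℂ)
          * Complex.I)
      = 2 * ((Real.cos (θ i) : ℝ) : ℂ) := by
    intro i
    rw [inner_single_int, inner_single_int]
    have e1 : (-((((1:ℤ):ℤ):ℝ) * θ i) : ℝ) = -(θ i) := by push_cast; ring
    have e2 : (-((((-1:ℤ):ℤ):ℝ) * θ i) : ℝ) = θ i := by push_cast; ring
    rw [e1, e2]
    exact hpair (θ i)
  rw [hz0, Finset.sum_congr rfl (fun i _ => hterm i), phiF]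
  push_cast
  rw [Finset.mul_sum]

/-- The Fourier representation of `srwP`. -/
lemma fourier_rep (n : ℕ) (x : Fin d → ℤ) :
    ∫ θ : Fin d → ℝ, Fker d n x θ = (((2*Real.pi)^d * srwP d n x : ℝ) : ℂ) := by
  induction n generalizing x with
  | zero =>
    have hpt : ∀ θ : Fin d → ℝ, Fker d 0 x θ
        = ∏ i, (((b1 (θ i) : ℝ) : ℂ)
            * Complex.exp ((((x i : ℝ) * θ i : ℝ) : ℂ) * Complex.I)) := by
      intro θ
      rw [Fker, pow_zero, mul_one, chiF_prod]
      rw [Finset.prod_mul_distrib]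
      congr 1
      · push_cast
        rfl
      · rw [show ((((∑ i, (x i:ℝ) * θ i) : ℝ)) : ℂ) = ∑ i, (((x i:ℝ) * θ i : ℝ) : ℂ) by push_cast; rfl]
        rw [Finset.sum_mul, Complex.exp_sum]
    rw [show (Fker d 0 x) = fun θ => ∏ i, (((b1 (θ i) : ℝ) : ℂ)
        * Complex.exp ((((x i : ℝ) * θ i : ℝ) : ℂ) * Complex.I)) from funext hpt]
    rw [MeasureTheory.integral_fintype_prod_volume_eq_prod (ι := Fin d)
      (f := fun i t => ((b1 t : ℝ) : ℂ) * Complex.exp ((((x i : ℝ) * t : ℝ) : ℂ) * Complex.I))]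
    rw [Finset.prod_congr rfl (fun i _ => oneDim (x i))]
    by_cases hx : x = 0
    · subst hx
      have h0 : srwP d 0 (0 : Fin d → ℤ) = 1 := by
        rw [show srwP d 0 (0 : Fin d → ℤ) = if (0 : Fin d → ℤ) = 0 then 1 else 0 from rfl,
          if_pos rfl]
      rw [h0]
      have hone : ∀ i : Fin d, (if (0 : Fin d → ℤ) i = 0 then ((2*Real.pi : ℝ) : ℂ) else 0)
          = ((2*Real.pi : ℝ) : ℂ) := fun i => if_pos rfl
      rw [Finset.prod_congr rfl (fun i _ => hone i), Finset.prod_const, Finset.card_univ,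
        Fintype.card_fin]
      push_cast
      ring
    · have h0 : srwP d 0 x = 0 := by
        have : srwP d 0 x = if x = 0 then 1 else 0 := rfl
        rw [this, if_neg hx]
      rw [h0]
      have : ∃ i, x i ≠ 0 := by
        by_contra hc; push_neg at hc; exact hx (funext fun i => hc i)
      obtain ⟨i, hi⟩ := this
      have hz : (if x i = 0 then ((2*Real.pi : ℝ) : ℂ) else 0) = 0 := if_neg hi
      rw [Finset.prod_eq_zero (Finset.mem_univ i) hz]
      push_cast
      ring
  | succ n ih =>
    have hpt : ∀ θ : Fin d → ℝ, Fker d (n+1) x θ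
        = ∑ z ∈ S d, ((W d : ℝ) : ℂ) * Fker d n (x - z) θ := by
      intro θ
      have hsplit : ∀ z : Fin d → ℤ, ((∑ i, ((x - z) i : ℝ) * θ i : ℝ) : ℂ)
          = ((∑ i, (x i : ℝ) * θ i : ℝ) : ℂ) + ((-(∑ i, ((z i : ℤ) : ℝ) * θ i) : ℝ) : ℂ) := by
        intro z
        push_cast
        rw [← sub_eq_add_neg, ← Finset.sum_sub_distrib]
        apply Finset.sum_congr rfl
        intro i _
        have hxz : ((x - z) i : ℤ) = x i - z i := rfl
        rw [hxz]
        push_cast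
        ring
      have expand : ∀ z : Fin d → ℤ, Fker d n (x - z) θ
          = ((chiF d θ * phiF d θ ^ n : ℝ) : ℂ)
            * Complex.exp (((∑ i, (x i : ℝ) * θ i : ℝ) : ℂ) * Complex.I)
            * Complex.exp (((-(∑ i, ((z i : ℤ) : ℝ) * θ i) : ℝ) : ℂ) * Complex.I) := by
        intro z
        rw [Fker, hsplit z, add_mul, Complex.exp_add]
        ring
      symm
      calc ∑ z ∈ S d, ((W d : ℝ) : ℂ) * Fker d n (x - z) θ
          = ∑ z ∈ S d, (((W d : ℝ) : ℂ) * (((chiF d θ * phiF d θ ^ n : ℝ) : ℂ)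
              * Complex.exp (((∑ i, (x i : ℝ) * θ i : ℝ) : ℂ) * Complex.I)))
              * Complex.exp (((-(∑ i, ((z i : ℤ) : ℝ) * θ i) : ℝ) : ℂ) * Complex.I) := by
            refine Finset.sum_congr rfl fun z _ => ?_
            rw [expand z]; ring
        _ = (((W d : ℝ) : ℂ) * (((chiF d θ * phiF d θ ^ n : ℝ) : ℂ)
              * Complex.exp (((∑ i, (x i : ℝ) * θ i : ℝ) : ℂ) * Complex.I)))
              * ∑ z ∈ S d, Complex.exp (((-(∑ i, ((z i : ℤ) : ℝ) * θ i) : ℝ) : ℂ)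
                  * Complex.I) := by
            rw [← Finset.mul_sum]
        _ = (((chiF d θ * phiF d θ ^ n : ℝ) : ℂ)
              * Complex.exp (((∑ i, (x i : ℝ) * θ i : ℝ) : ℂ) * Complex.I))
              * (((W d : ℝ) : ℂ) * ∑ z ∈ S d,
                  Complex.exp (((-(∑ i, ((z i : ℤ) : ℝ) * θ i) : ℝ) : ℂ) * Complex.I)) := by
            ring
        _ = (((chiF d θ * phiF d θ ^ n : ℝ) : ℂ)
              * Complex.exp (((∑ i, (x i : ℝ) * θ i : ℝ) : ℂ) * Complex.I))
              * ((phiF d θ : ℝ) : ℂ) := by rw [← phiC]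
        _ = Fker d (n+1) x θ := by
            rw [Fker]
            push_cast
            ring
    rw [show Fker d (n+1) x = fun θ => ∑ z ∈ S d, ((W d : ℝ) : ℂ) * Fker d n (x - z) θ
      from funext hpt]
    rw [MeasureTheory.integral_finset_sum _ (fun z _ => (Fker_integrable n (x - z)).const_mul _)]
    rw [Finset.sum_congr rfl (fun z (_ : z ∈ S d) => by
      rw [MeasureTheory.integral_const_mul, ih (x - z)])]
    rw [srwP_succ]
    push_cast
    rw [Finset.mul_sum]
    refine Finset.sum_congr rfl fun z _ => by ring

/-- The Gaussian decay rate of the Fourier multiplier. -/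
noncomputable def cF (d : ℕ) : ℝ := 2 * W d / (d * Real.pi^2)

lemma cF_pos (hd : 1 ≤ d) : 0 < cF d := by
  have h1 : (0:ℝ) < d := by exact_mod_cast hd
  have := W_pos (d := d)
  have := Real.pi_pos
  rw [cF]
  positivity

lemma phiF_abs_le (hd : 1 ≤ d) {θ : Fin d → ℝ} (hθ : θ ∈ boxF d) :
    |phiF d θ| ≤ Real.exp (-(cF d) * ∑ i, (θ i)^2) := by
  have hW : W d * (2*(d:ℝ)+1) = 1 := by rw [W]; field_simp
  have hd' : (1:ℝ) ≤ d := by exact_mod_cast hd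
  have hπ := Real.pi_pos
  have habs : ∀ i, |θ i| ≤ Real.pi := by
    intro i
    have : θ i ∈ Set.Icc (-Real.pi) Real.pi := hθ i (Set.mem_univ i)
    rw [abs_le]
    exact ⟨this.1, this.2⟩
  set Sq := ∑ i, (θ i)^2 with hSq
  have hSq_nonneg : 0 ≤ Sq := Finset.sum_nonneg fun i _ => sq_nonneg _
  have hSq_le : Sq ≤ d * Real.pi^2 := by
    calc Sq ≤ ∑ _i : Fin d, Real.pi^2 := Finset.sum_le_sum fun i _ => by
          have := habs i
          nlinarith [sq_abs (θ i), abs_nonneg (θ i)]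
      _ = d * Real.pi^2 := by
          rw [Finset.sum_const, Finset.card_univ, Fintype.card_fin, nsmul_eq_mul]
  have hcF_dpi : cF d * (d * Real.pi^2) = 2 * W d := by
    rw [cF]
    field_simp
  have hcF_le : cF d ≤ 4 * W d / Real.pi^2 := by
    rw [cF, div_le_div_iff₀ (by positivity) (by positivity)]
    nlinarith [W_pos (d := d)]
  -- upper bound
  have hub : phiF d θ ≤ 1 - cF d * Sq := by
    have hcos : ∀ i, Real.cos (θ i) ≤ 1 - 2 / Real.pi^2 * (θ i)^2 := fun i =>
      Real.cos_le_one_sub_mul_cos_sq (habs i)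
    have hsum : ∑ i, Real.cos (θ i) ≤ ∑ i, (1 - 2 / Real.pi^2 * (θ i)^2) :=
      Finset.sum_le_sum fun i _ => hcos i
    have hsum2 : ∑ i, (1 - 2 / Real.pi^2 * (θ i)^2) = d - 2/Real.pi^2 * Sq := by
      rw [Finset.sum_sub_distrib, Finset.sum_const, Finset.card_univ, Fintype.card_fin,
        nsmul_eq_mul, ← Finset.mul_sum, hSq]
      ring
    have h1 : phiF d θ ≤ W d * (1 + 2 * ((d:ℝ) - 2/Real.pi^2 * Sq)) := by
      rw [phiF]
      have := hsum.trans (le_of_eq hsum2)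
      nlinarith [W_pos (d := d)]
    calc phiF d θ ≤ W d * (1 + 2 * ((d:ℝ) - 2/Real.pi^2 * Sq)) := h1
      _ = 1 - (4 * W d / Real.pi^2) * Sq := by
          field_simp
          linear_combination (Real.pi^2) * hW
      _ ≤ 1 - cF d * Sq := by nlinarith [hcF_le, hSq_nonneg]
  -- lower bound
  have hlb : -(1 - cF d * Sq) ≤ phiF d θ := by
    have hcos : ∀ i, -1 ≤ Real.cos (θ i) := fun i => Real.neg_one_le_cos (θ i)
    have hsum : (-(d:ℝ)) ≤ ∑ i, Real.cos (θ i) := by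
      calc (-(d:ℝ)) = ∑ _i : Fin d, (-1 : ℝ) := by
            rw [Finset.sum_const, Finset.card_univ, Fintype.card_fin, nsmul_eq_mul]; ring
        _ ≤ ∑ i, Real.cos (θ i) := Finset.sum_le_sum fun i _ => hcos i
    have h1 : W d * (1 - 2*(d:ℝ)) ≤ phiF d θ := by
      rw [phiF]
      nlinarith [W_pos (d := d)]
    have h2 : W d * (1 - 2*(d:ℝ)) = -(1 - 2 * W d) := by linear_combination -hW
    have h3 : cF d * Sq ≤ 2 * W d := by
      calc cF d * Sq ≤ cF d * (d * Real.pi^2) := by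
            apply mul_le_mul_of_nonneg_left hSq_le (cF_pos hd).le
        _ = 2 * W d := hcF_dpi
    linarith
  have habs2 : |phiF d θ| ≤ 1 - cF d * Sq := abs_le.2 ⟨hlb, hub⟩
  have hexp : 1 - cF d * Sq ≤ Real.exp (-(cF d) * Sq) := by
    have := Real.add_one_le_exp (-(cF d) * Sq)
    linarith
  exact habs2.trans hexp

/-- Prefactor of the on-diagonal bound. -/
noncomputable def KA (d : ℕ) : ℝ := ((2*Real.pi)⁻¹ * Real.sqrt (Real.pi / cF d))^d

lemma KA_pos (hd : 1 ≤ d) : 0 < KA d := by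
  have h1 : 0 < Real.pi / cF d := div_pos Real.pi_pos (cF_pos hd)
  have h2 : 0 < Real.sqrt (Real.pi / cF d) := Real.sqrt_pos.2 h1
  have := Real.pi_pos
  rw [KA]
  positivity

/-- On-diagonal (sup) bound from the Fourier representation. -/
lemma supP (hd : 1 ≤ d) {n : ℕ} (hn : 1 ≤ n) (x : Fin d → ℤ) :
    srwP d n x ≤ KA d * ((n:ℝ)⁻¹)^((d:ℝ)/2) := by
  have hπ := Real.pi_pos
  have hnpos : (0:ℝ) < n := by exact_mod_cast hn
  have hc : 0 < cF d * n := mul_pos (cF_pos hd) hnpos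
  -- the real value of the integral
  have h1 : (2*Real.pi)^d * srwP d n x = (∫ θ : Fin d → ℝ, Fker d n x θ).re := by
    rw [fourier_rep, Complex.ofReal_re]
  set g : ℝ → ℝ := fun t => b1 t * Real.exp (-(cF d * n) * t^2) with hg
  have hg_eq : g = (Set.Icc (-Real.pi) Real.pi).indicator
      (fun t => Real.exp (-(cF d * n) * t^2)) := by
    funext t
    by_cases h : t ∈ Set.Icc (-Real.pi) Real.pi
    · rw [hg]; simp only [b1, Set.indicator_of_mem h]; ring
    · rw [hg]; simp only [b1, Set.indicator_of_notMem h]; ring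
  have hg_int : MeasureTheory.Integrable g := by
    rw [hg_eq]
    apply MeasureTheory.IntegrableOn.integrable_indicator _ measurableSet_Icc
    apply ContinuousOn.integrableOn_compact isCompact_Icc
    apply Continuous.continuousOn
    fun_prop
  have hg_nonneg : ∀ t, 0 ≤ g t := by
    intro t
    rw [hg]
    apply mul_nonneg _ (Real.exp_pos _).le
    rw [b1]
    exact Set.indicator_nonneg (fun _ _ => by norm_num) t
  -- pointwise norm bound
  have h4 : ∀ θ : Fin d → ℝ, ‖Fker d n x θ‖ ≤ ∏ i, g (θ i) := by
    intro θ
    have hnorm : ‖Fker d n x θ‖ = |chiF d θ * phiF d θ ^ n| := by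
      rw [Fker, norm_mul, Complex.norm_real,
        Complex.norm_exp_ofReal_mul_I, mul_one, Real.norm_eq_abs]
    rw [hnorm]
    by_cases hθ : θ ∈ boxF d
    · rw [chiF_eq_one hθ, one_mul, abs_pow]
      have hb : |phiF d θ| ^ n ≤ Real.exp (-(cF d) * ∑ i, (θ i)^2) ^ n :=
        pow_le_pow_left₀ (abs_nonneg _) (phiF_abs_le hd hθ) n
      have hprod : ∏ i, g (θ i) = Real.exp (-(cF d) * ∑ i, (θ i)^2) ^ n := by
        rw [hg]
        simp only []
        rw [Finset.prod_mul_distrib, ← chiF_prod, chiF_eq_one hθ, one_mul,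
          ← Real.exp_sum]
        rw [← Real.exp_nat_mul]
        congr 1
        have hterm : ∀ i : Fin d, -(cF d * (n:ℝ)) * θ i ^ 2 = (n:ℝ) * (-cF d * θ i ^ 2) :=
          fun i => by ring
        rw [Finset.sum_congr rfl fun i _ => hterm i, ← Finset.mul_sum]
        congr 1
        rw [← Finset.mul_sum]
      rw [hprod]
      exact hb
    · rw [chiF_eq_zero hθ, zero_mul, abs_zero]
      exact Finset.prod_nonneg fun i _ => hg_nonneg (θ i)
  have h5 : MeasureTheory.Integrable (fun θ : Fin d → ℝ => ∏ i, g (θ i)) :=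
    MeasureTheory.Integrable.fintype_prod (f := fun _ : Fin d => g) fun _ => hg_int
  have h6 : ∫ θ : Fin d → ℝ, ‖Fker d n x θ‖ ≤ ∫ θ : Fin d → ℝ, ∏ i, g (θ i) :=
    MeasureTheory.integral_mono (Fker_integrable n x).norm h5 h4
  have h7 : ∫ θ : Fin d → ℝ, ∏ i, g (θ i) = (∫ t, g t)^d := by
    rw [MeasureTheory.integral_fintype_prod_volume_eq_pow (ι := Fin d) g, Fintype.card_fin]
  have h8 : ∫ t, g t ≤ Real.sqrt (Real.pi / (cF d * n)) := by
    rw [hg_eq, MeasureTheory.integral_indicator measurableSet_Icc]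
    rw [← integral_gaussian (cF d * n)]
    apply MeasureTheory.setIntegral_le_integral (integrable_exp_neg_mul_sq hc)
    exact Filter.Eventually.of_forall fun t => (Real.exp_pos _).le
  have h9 : (0:ℝ) ≤ ∫ t, g t := MeasureTheory.integral_nonneg hg_nonneg
  have h10 : (∫ t, g t)^d ≤ (Real.sqrt (Real.pi / (cF d * n)))^d :=
    pow_le_pow_left₀ h9 h8 d
  have h11 : Real.sqrt (Real.pi / (cF d * n))
      = Real.sqrt (Real.pi / cF d) * Real.sqrt ((n:ℝ)⁻¹) := by
    rw [← Real.sqrt_mul (div_pos Real.pi_pos (cF_pos hd)).le]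
    congr 1
    field_simp
  have h12 : (Real.sqrt ((n:ℝ)⁻¹))^d = ((n:ℝ)⁻¹)^((d:ℝ)/2) := by
    rw [← Real.rpow_natCast (Real.sqrt ((n:ℝ)⁻¹)) d, Real.sqrt_eq_rpow,
      ← Real.rpow_mul (by positivity : (0:ℝ) ≤ ((n:ℝ)⁻¹))]
    congr 1
    ring
  -- combine
  have hchain : (2*Real.pi)^d * srwP d n x
      ≤ (Real.sqrt (Real.pi / cF d))^d * ((n:ℝ)⁻¹)^((d:ℝ)/2) := by
    rw [h1]
    calc (∫ θ : Fin d → ℝ, Fker d n x θ).re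
        ≤ ‖∫ θ : Fin d → ℝ, Fker d n x θ‖ := Complex.re_le_norm _
      _ = ‖∫ θ : Fin d → ℝ, Fker d n x θ‖ := rfl
      _ ≤ ∫ θ : Fin d → ℝ, ‖Fker d n x θ‖ := MeasureTheory.norm_integral_le_integral_norm _
      _ ≤ ∫ θ : Fin d → ℝ, ∏ i, g (θ i) := h6
      _ = (∫ t, g t)^d := h7
      _ ≤ (Real.sqrt (Real.pi / (cF d * n)))^d := h10
      _ = (Real.sqrt (Real.pi / cF d))^d * ((n:ℝ)⁻¹)^((d:ℝ)/2) := by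
          rw [h11, mul_pow, h12]
  have hpow : (0:ℝ) < (2*Real.pi)^d := by positivity
  calc srwP d n x = ((2*Real.pi)^d)⁻¹ * ((2*Real.pi)^d * srwP d n x) := by
        field_simp
    _ ≤ ((2*Real.pi)^d)⁻¹ * ((Real.sqrt (Real.pi / cF d))^d * ((n:ℝ)⁻¹)^((d:ℝ)/2)) := by
        apply mul_le_mul_of_nonneg_left hchain (by positivity)
    _ = KA d * ((n:ℝ)⁻¹)^((d:ℝ)/2) := by
        rw [KA, mul_pow (2*Real.pi)⁻¹, inv_pow (2*Real.pi) d]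
        ring

lemma mass (n : ℕ) : ∑ y ∈ Box d n, srwP d n y = 1 := by
  have h := mgf n (0 : Fin d → ℝ)
  simp only [Pi.zero_apply, zero_mul, Finset.sum_const_zero, Real.exp_zero, mul_one] at h
  rw [h, sum_S (f := fun _ => (1:ℝ))]
  have hW : W d * (2*(d:ℝ)+1) = 1 := by rw [W]; field_simp
  have : (1:ℝ) + ∑ _i : Fin d, ((1:ℝ) + 1) = 2*(d:ℝ)+1 := by
    rw [Finset.sum_const, Finset.card_univ, Fintype.card_fin, nsmul_eq_mul]
    ring
  rw [this, hW, one_pow]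

lemma srwP_le_one (n : ℕ) (x : Fin d → ℤ) : srwP d n x ≤ 1 := by
  by_cases hx : x ∈ Box d n
  · calc srwP d n x ≤ ∑ y ∈ Box d n, srwP d n y :=
        Finset.single_le_sum (fun y _ => srwP_nonneg n y) hx
      _ = 1 := mass n
  · rw [srwP_eq_zero hx]; norm_num

lemma sum_sq_le_one_of_mem_S {z : Fin d → ℤ} (hz : z ∈ S d) :
    ∑ i, ((z i : ℝ))^2 ≤ 1 := by
  rw [S] at hz
  simp only [Finset.mem_insert, Finset.mem_union, Finset.mem_image, Finset.mem_univ,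
    true_and] at hz
  have hsingle : ∀ (i : Fin d) (c : ℤ), ∑ j, (((Pi.single i c : Fin d → ℤ) j : ℤ) : ℝ)^2
      = ((c:ℤ):ℝ)^2 := by
    intro i c
    rw [Finset.sum_eq_single i]
    · rw [Pi.single_eq_same]
    · intro j _ hj; rw [Pi.single_eq_of_ne hj]; norm_num
    · simp
  rcases hz with rfl | ⟨i, hi⟩ | ⟨i, hi⟩
  · simp
  · rw [← hi, hsingle]; norm_num
  · rw [← hi, hsingle]; norm_num

lemma srwP_one_eq_zero {x : Fin d → ℤ} (hx : x ∉ S d) : srwP d 1 x = 0 := by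
  rw [srwP_succ]
  apply Finset.sum_eq_zero
  intro z hz
  have : x - z ≠ 0 := by
    intro h
    exact hx (by rwa [sub_eq_zero.1 h])
  have h0 : srwP d 0 (x - z) = if x - z = 0 then 1 else 0 := rfl
  rw [h0, if_neg this, mul_zero]

/-- The main off-diagonal estimate. -/
lemma mainQ (hd : 1 ≤ d) : ∃ K : ℝ, 0 < K ∧ ∀ n : ℕ, 1 ≤ n → ∀ x : Fin d → ℤ,
    srwP d n x ≤ K * ((n:ℝ)⁻¹)^((d:ℝ)/2)
      * Real.exp (-(∑ i, ((x i : ℝ))^2)/(32*(d:ℝ)*n)) := by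
  classical
  have hdR : (1:ℝ) ≤ d := by exact_mod_cast hd
  have hKA := KA_pos hd
  set K : ℝ := Real.exp 1 + 4*(d:ℝ)*(3:ℝ)^((d:ℝ)/2)*KA d with hK
  have hKe : Real.exp 1 ≤ K := by
    rw [hK]
    have : 0 < 4*(d:ℝ)*(3:ℝ)^((d:ℝ)/2)*KA d := by positivity
    linarith
  have hK4 : 4*(d:ℝ)*(3:ℝ)^((d:ℝ)/2)*KA d ≤ K := by
    rw [hK]
    have := Real.exp_pos 1
    linarith
  refine ⟨K, lt_of_lt_of_le (Real.exp_pos 1) hKe, ?_⟩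
  intro n hn x
  set Sx : ℝ := ∑ i, ((x i : ℝ))^2 with hSx
  have hSx_nonneg : 0 ≤ Sx := Finset.sum_nonneg fun i _ => sq_nonneg _
  rcases Nat.lt_or_ge n 2 with h2 | h2
  · -- n = 1
    have hn1 : n = 1 := by omega
    subst hn1
    simp only [Nat.cast_one, inv_one, Real.one_rpow, mul_one]
    by_cases hx : x ∈ S d
    · have hSx1 : Sx ≤ 1 := sum_sq_le_one_of_mem_S hx
      have hexp : Real.exp (-1) ≤ Real.exp (-Sx/(32*(d:ℝ))) := by
        apply Real.exp_le_exp.2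
        rw [neg_div]
        have h1 : Sx/(32*(d:ℝ)) ≤ 1 := by
          rw [div_le_one (by nlinarith)]
          nlinarith
        linarith
      calc srwP d 1 x ≤ 1 := srwP_le_one 1 x
        _ = Real.exp 1 * Real.exp (-1) := by rw [← Real.exp_add]; norm_num
        _ ≤ K * Real.exp (-Sx/(32*(d:ℝ))) := by
            apply mul_le_mul hKe hexp (Real.exp_pos _).le
            linarith [Real.exp_pos 1, hKe]
    · rw [srwP_one_eq_zero hx]
      positivity
  · -- n ≥ 2
    set m := n/2 with hm
    set k := n - m with hk
    have hm1 : 1 ≤ m := by omega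
    have hk1 : 1 ≤ k := by omega
    have hmn : m ≤ n := by omega
    have hkn : k ≤ n := by omega
    have h3m : n ≤ 3*m := by omega
    have h3k : n ≤ 3*k := by omega
    have hmk : m + k = n := by omega
    have hnR : (0:ℝ) < n := by exact_mod_cast Nat.lt_of_lt_of_le Nat.zero_lt_one hn
    have hmR : (0:ℝ) < m := by exact_mod_cast hm1
    have hkR : (0:ℝ) < k := by exact_mod_cast hk1
    set D : ℝ := KA d * (3:ℝ)^((d:ℝ)/2) * ((n:ℝ)⁻¹)^((d:ℝ)/2) with hD
    have hD_nonneg : 0 ≤ D := by positivity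
    have hsup : ∀ (N : ℕ), 1 ≤ N → n ≤ 3*N → ∀ u : Fin d → ℤ, srwP d N u ≤ D := by
      intro N hN h3N u
      have hNR : (0:ℝ) < N := by exact_mod_cast hN
      have hinv : ((N:ℝ))⁻¹ ≤ 3*((n:ℝ))⁻¹ := by
        rw [inv_eq_one_div, inv_eq_one_div, show (3:ℝ)*(1/(n:ℝ)) = 3/(n:ℝ) by ring,
          div_le_div_iff₀ hNR hnR]
        have : (n:ℝ) ≤ 3*(N:ℝ) := by exact_mod_cast h3N
        linarith
      calc srwP d N u ≤ KA d * ((N:ℝ)⁻¹)^((d:ℝ)/2) := supP hd hN u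
        _ ≤ KA d * ((3:ℝ)*((n:ℝ))⁻¹)^((d:ℝ)/2) := by
            apply mul_le_mul_of_nonneg_left _ hKA.le
            exact Real.rpow_le_rpow (by positivity) hinv (by positivity)
        _ = D := by
            rw [hD, Real.mul_rpow (by norm_num) (by positivity)]
            ring
    have hE : Real.exp (-(Sx/4)/(8*(d:ℝ)*m)) ≤ Real.exp (-Sx/(32*(d:ℝ)*n)) := by
      apply Real.exp_le_exp.2
      rw [show (-(Sx/4)/(8*(d:ℝ)*m)) = -(Sx/(32*(d:ℝ)*m)) by rw [neg_div, div_div]; ring_nf]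
      rw [neg_div, neg_le_neg_iff]
      apply div_le_div_of_nonneg_left hSx_nonneg (by positivity)
      have : (m:ℝ) ≤ n := by exact_mod_cast hmn
      nlinarith
    have hEk : Real.exp (-(Sx/4)/(8*(d:ℝ)*k)) ≤ Real.exp (-Sx/(32*(d:ℝ)*n)) := by
      apply Real.exp_le_exp.2
      rw [show (-(Sx/4)/(8*(d:ℝ)*k)) = -(Sx/(32*(d:ℝ)*k)) by rw [neg_div, div_div]; ring_nf]
      rw [neg_div, neg_le_neg_iff]
      apply div_le_div_of_nonneg_left hSx_nonneg (by positivity)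
      have : (k:ℝ) ≤ n := by exact_mod_cast hkn
      nlinarith
    have hconv : srwP d n x = ∑ y ∈ Box d m, srwP d m y * srwP d k (x - y) := by
      have := conv (d := d) m k x
      rwa [hmk] at this
    set F1 := (Box d m).filter (fun y => Sx/4 ≤ ∑ i, ((y i : ℝ))^2) with hF1
    set F2 := (Box d m).filter (fun y => ¬ (Sx/4 ≤ ∑ i, ((y i : ℝ))^2)) with hF2
    have hsplit : ∑ y ∈ Box d m, srwP d m y * srwP d k (x - y)
        = ∑ y ∈ F1, srwP d m y * srwP d k (x - y)
          + ∑ y ∈ F2, srwP d m y * srwP d k (x - y) :=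
      (Finset.sum_filter_add_sum_filter_not (Box d m) _ _).symm
    -- Term 1
    have hT1 : ∑ y ∈ F1, srwP d m y * srwP d k (x - y)
        ≤ D * (2*(d:ℝ) * Real.exp (-Sx/(32*(d:ℝ)*n))) := by
      calc ∑ y ∈ F1, srwP d m y * srwP d k (x - y)
          ≤ ∑ y ∈ F1, srwP d m y * D := Finset.sum_le_sum fun y _ =>
            mul_le_mul_of_nonneg_left (hsup k hk1 h3k (x - y)) (srwP_nonneg m y)
        _ = D * ∑ y ∈ F1, srwP d m y := by rw [← Finset.sum_mul]; ring
        _ ≤ D * (2*(d:ℝ) * Real.exp (-(Sx/4)/(8*(d:ℝ)*m))) := by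
            apply mul_le_mul_of_nonneg_left _ hD_nonneg
            exact tailP hd hm1 (by positivity) F1
              (fun y hy => (Finset.mem_filter.1 hy).2)
        _ ≤ D * (2*(d:ℝ) * Real.exp (-Sx/(32*(d:ℝ)*n))) := by
            apply mul_le_mul_of_nonneg_left _ hD_nonneg
            apply mul_le_mul_of_nonneg_left hE (by positivity)
    -- Term 2
    have hT2 : ∑ y ∈ F2, srwP d m y * srwP d k (x - y)
        ≤ D * (2*(d:ℝ) * Real.exp (-Sx/(32*(d:ℝ)*n))) := by
      set G2 := F2.image (fun y => x - y) with hG2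
      have himg : ∑ y ∈ F2, srwP d k (x - y)
          = ∑ u ∈ G2, srwP d k u :=
        (Finset.sum_image fun a _ b _ h => sub_right_injective h).symm
      have hSq4 : (0:ℝ) ≤ Sx/4 := by positivity
      have hcond : ∀ u ∈ G2, Sx/4 ≤ ∑ i, ((u i : ℝ))^2 := by
        intro u hu
        obtain ⟨y, hyF2, rfl⟩ := Finset.mem_image.1 hu
        have hylt : ∑ i, ((y i : ℝ))^2 < Sx/4 :=
          not_le.1 (Finset.mem_filter.1 hyF2).2
        have hcoord : ∀ i, (x i : ℝ)^2/2 - (y i : ℝ)^2 ≤ (((x - y) i : ℤ) : ℝ)^2 := by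
          intro i
          have hxy : ((x - y) i : ℤ) = x i - y i := rfl
          rw [hxy]
          push_cast
          nlinarith [sq_nonneg ((x i : ℝ) - 2*(y i : ℝ))]
        have hsum : ∑ i, ((x i : ℝ)^2/2 - (y i : ℝ)^2) ≤ ∑ i, (((x - y) i : ℤ) : ℝ)^2 :=
          Finset.sum_le_sum fun i _ => hcoord i
        have hsum2 : ∑ i, ((x i : ℝ)^2/2 - (y i : ℝ)^2)
            = Sx/2 - ∑ i, ((y i : ℝ))^2 := by
          rw [Finset.sum_sub_distrib, hSx, ← Finset.sum_div]
        rw [hsum2] at hsum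
        linarith
      calc ∑ y ∈ F2, srwP d m y * srwP d k (x - y)
          ≤ ∑ y ∈ F2, D * srwP d k (x - y) := Finset.sum_le_sum fun y _ =>
            mul_le_mul_of_nonneg_right (hsup m hm1 h3m y) (srwP_nonneg k (x - y))
        _ = D * ∑ y ∈ F2, srwP d k (x - y) := by rw [Finset.mul_sum]
        _ = D * ∑ u ∈ G2, srwP d k u := by rw [himg]
        _ ≤ D * (2*(d:ℝ) * Real.exp (-(Sx/4)/(8*(d:ℝ)*k))) := by
            have htail := tailP hd hk1 hSq4 G2 hcond
            exact mul_le_mul_of_nonneg_left htail hD_nonneg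
        _ ≤ D * (2*(d:ℝ) * Real.exp (-Sx/(32*(d:ℝ)*n))) := by
            apply mul_le_mul_of_nonneg_left _ hD_nonneg
            apply mul_le_mul_of_nonneg_left hEk (by positivity)
    -- combine
    have hfinal : srwP d n x
        ≤ (4*(d:ℝ)*(3:ℝ)^((d:ℝ)/2)*KA d) * ((n:ℝ)⁻¹)^((d:ℝ)/2)
            * Real.exp (-Sx/(32*(d:ℝ)*n)) := by
      rw [hconv, hsplit]
      calc ∑ y ∈ F1, srwP d m y * srwP d k (x - y)
            + ∑ y ∈ F2, srwP d m y * srwP d k (x - y)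
          ≤ D * (2*(d:ℝ) * Real.exp (-Sx/(32*(d:ℝ)*n)))
            + D * (2*(d:ℝ) * Real.exp (-Sx/(32*(d:ℝ)*n))) := add_le_add hT1 hT2
        _ = (4*(d:ℝ)*(3:ℝ)^((d:ℝ)/2)*KA d) * ((n:ℝ)⁻¹)^((d:ℝ)/2)
            * Real.exp (-Sx/(32*(d:ℝ)*n)) := by
            rw [hD]
            ring
    calc srwP d n x
        ≤ (4*(d:ℝ)*(3:ℝ)^((d:ℝ)/2)*KA d) * ((n:ℝ)⁻¹)^((d:ℝ)/2)
            * Real.exp (-Sx/(32*(d:ℝ)*n)) := hfinal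
      _ ≤ K * ((n:ℝ)⁻¹)^((d:ℝ)/2) * Real.exp (-Sx/(32*(d:ℝ)*n)) := by
          apply mul_le_mul_of_nonneg_right _ (Real.exp_pos _).le
          exact mul_le_mul_of_nonneg_right hK4 (by positivity)
end SRW
/-- `P_n(x) ≤ C φ_n(βx)` for all sufficiently small `β > 0`. -/
theorem srwP_le_gauss (d : ℕ) (hd : 1 ≤ d) :
    ∃ β₀ > (0 : ℝ), ∀ β : ℝ, 0 < β → β ≤ β₀ →
      ∃ C > (0 : ℝ), ∀ n : ℕ, 1 ≤ n → ∀ x : Fin d → ℤ,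
        srwP d n x ≤ C * gauss d n (β • toRealVec x) := by
  obtain ⟨K, hK, hQ⟩ := SRW.mainQ hd
  have hdR : (1:ℝ) ≤ d := by exact_mod_cast hd
  have hdpos : (0:ℝ) < d := by linarith
  have hπ := Real.pi_pos
  refine ⟨1/(4*Real.sqrt d), by positivity, ?_⟩
  intro β hβ hββ
  refine ⟨K * (2*Real.pi)^((d:ℝ)/2), by positivity, ?_⟩
  intro n hn x
  have hnR : (0:ℝ) < n := by exact_mod_cast hn
  set Sx : ℝ := ∑ i, ((x i : ℝ))^2 with hSx
  have hSx_nonneg : 0 ≤ Sx := Finset.sum_nonneg fun i _ => sq_nonneg _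
  have hsum : ∑ i, ((β • toRealVec x) i)^2 = β^2 * Sx := by
    rw [hSx, Finset.mul_sum]
    refine Finset.sum_congr rfl fun i _ => ?_
    simp only [Pi.smul_apply, toRealVec, smul_eq_mul]
    ring
  have hgauss : gauss d n (β • toRealVec x)
      = (2*Real.pi*(n:ℝ))^(-(d:ℝ)/2) * Real.exp (-(β^2*Sx)/(2*(n:ℝ))) := by
    rw [gauss, hsum]
  have hβsq : β^2 ≤ 1/(16*(d:ℝ)) := by
    have hs : (0:ℝ) < Real.sqrt d := Real.sqrt_pos.2 hdpos
    have h2 : β^2 ≤ (1/(4*Real.sqrt d))^2 := pow_le_pow_left₀ hβ.le hββ 2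
    have h3 : (1/(4*Real.sqrt d))^2 = 1/(16*(d:ℝ)) := by
      rw [div_pow, one_pow, mul_pow, Real.sq_sqrt hdpos.le]
      norm_num
    exact h2.trans_eq h3
  have hexp : Real.exp (-Sx/(32*(d:ℝ)*n)) ≤ Real.exp (-(β^2*Sx)/(2*(n:ℝ))) := by
    apply Real.exp_le_exp.2
    rw [neg_div, neg_div, neg_le_neg_iff]
    rw [div_le_div_iff₀ (by positivity) (by positivity)]
    have h16 : β^2 * (16*(d:ℝ)) ≤ 1 := by
      have := mul_le_mul_of_nonneg_right hβsq (by positivity : (0:ℝ) ≤ 16*(d:ℝ))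
      calc β^2 * (16*(d:ℝ)) ≤ 1/(16*(d:ℝ)) * (16*(d:ℝ)) := this
        _ = 1 := by field_simp
    nlinarith [hSx_nonneg, hnR, hdpos, mul_nonneg hSx_nonneg hnR.le]
  have hpre : (2*Real.pi*(n:ℝ))^(-(d:ℝ)/2)
      = (2*Real.pi)^(-(d:ℝ)/2) * ((n:ℝ))^(-(d:ℝ)/2) :=
    Real.mul_rpow (by positivity) hnR.le
  have hnn : ((n:ℝ))^(-(d:ℝ)/2) = ((n:ℝ)⁻¹)^((d:ℝ)/2) := by
    rw [show (-(d:ℝ)/2) = -((d:ℝ)/2) by ring, Real.rpow_neg hnR.le,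
      ← Real.inv_rpow hnR.le]
  have hcancel : (2*Real.pi)^((d:ℝ)/2) * (2*Real.pi)^(-(d:ℝ)/2) = 1 := by
    rw [← Real.rpow_add (by positivity), show (d:ℝ)/2 + -(d:ℝ)/2 = 0 by ring,
      Real.rpow_zero]
  calc srwP d n x
      ≤ K * ((n:ℝ)⁻¹)^((d:ℝ)/2) * Real.exp (-Sx/(32*(d:ℝ)*n)) := hQ n hn x
    _ ≤ K * ((n:ℝ)⁻¹)^((d:ℝ)/2) * Real.exp (-(β^2*Sx)/(2*(n:ℝ))) :=
        mul_le_mul_of_nonneg_left hexp (by positivity)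
    _ = (K * (2*Real.pi)^((d:ℝ)/2)) * gauss d n (β • toRealVec x) := by
        rw [hgauss, hpre, hnn]
        linear_combination
          (-(K * (((n:ℝ)⁻¹)^((d:ℝ)/2)) * Real.exp (-(β^2*Sx)/(2*(n:ℝ))))) * hcancel
end

section
/- Let d ≥ 1, let φ_n be the Gaussian kernel on R^d, and set Φ_n(x, y) = φ_n(x) + φ_n(y). Then there exists β₀ > 0 such that for every β ∈ (0, β₀] there is a constant C = C(β) > 0 with: for all integers n ≥ 1 and all x, y ∈ R^d, |φ_n(x) − φ_n(y)| ≤ C · min(|x − y|/√n, 1) · Φ_n(βx, βy). -/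
open scoped BigOperators

lemma scalar_bound {u : ℝ} (hu : 0 ≤ u) :
    (u + 1/2) * Real.exp (-(u^2)/2) ≤ 6 * Real.exp (-(u^2)/8) := by
  have key : u + 1/2 ≤ 6 * Real.exp (3*u^2/8) := by
    have h1 := Real.add_one_le_exp (3*u^2/8)
    nlinarith
  have h2 : Real.exp (3*u^2/8) * Real.exp (-(u^2)/2) = Real.exp (-(u^2)/8) := by
    rw [← Real.exp_add]; ring_nf
  have h3 := (Real.exp_pos (-(u^2)/2)).le
  calc (u + 1/2) * Real.exp (-(u^2)/2)
      ≤ (6 * Real.exp (3*u^2/8)) * Real.exp (-(u^2)/2) :=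
        mul_le_mul_of_nonneg_right key h3
    _ = 6 * Real.exp (-(u^2)/8) := by rw [mul_assoc, h2]

lemma exp_diff_le {A B : ℝ} (h : A ≤ B) :
    Real.exp (-A) - Real.exp (-B) ≤ (B - A) * Real.exp (-A) := by
  have h1 := Real.add_one_le_exp (-(B-A))
  have h2 : Real.exp (-B) = Real.exp (-(B-A)) * Real.exp (-A) := by
    rw [← Real.exp_add]; ring_nf
  nlinarith [Real.exp_pos (-A)]

lemma key_aux {β t a b s : ℝ} (hβ : 0 < β) (hβ' : β ≤ 1/2) (ht : 0 < t)
    (ha : 0 ≤ a) (hab : a ≤ b) (hs : b - a ≤ s) :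
    Real.exp (-(a^2) / (2*t)) - Real.exp (-(b^2) / (2*t)) ≤
      6 * min (s / Real.sqrt t) 1 * Real.exp (-(β^2*a^2) / (2*t)) := by
  obtain ⟨r, hr, rfl⟩ : ∃ r > 0, t = r^2 :=
    ⟨Real.sqrt t, Real.sqrt_pos.mpr ht, (Real.sq_sqrt ht.le).symm⟩
  rw [Real.sqrt_sq hr.le]
  have hb : 0 ≤ b := ha.trans hab
  have hs0 : 0 ≤ s := le_trans (by linarith) hs
  have hβ2 : β^2 ≤ 1/4 := by nlinarith
  have ht : (0:ℝ) < 2 * r^2 := by positivity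
  rcases le_or_gt 1 (s / r) with hcase | hcase
  · rw [min_eq_right hcase]
    have h1 : Real.exp (-(a^2)/(2*r^2)) ≤ Real.exp (-(β^2*a^2)/(2*r^2)) := by
      apply Real.exp_le_exp.mpr
      rw [div_le_div_iff_of_pos_right ht]
      nlinarith
    have h2 := (Real.exp_pos (-(b^2)/(2*r^2))).le
    nlinarith [Real.exp_pos (-(β^2*a^2)/(2*r^2))]
  · rw [min_eq_left hcase.le]
    have hslt : s < r := (div_lt_one hr).mp hcase
    have hAB : a^2/(2*r^2) ≤ b^2/(2*r^2) := by
      gcongr <;> nlinarith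
    have step1 : Real.exp (-(a^2)/(2*r^2)) - Real.exp (-(b^2)/(2*r^2)) ≤
        (b^2/(2*r^2) - a^2/(2*r^2)) * Real.exp (-(a^2)/(2*r^2)) := by
      have := exp_diff_le hAB
      simpa [neg_div] using this
    set u := a / r with hu
    have hu0 : 0 ≤ u := div_nonneg ha hr.le
    have hfac : b^2/(2*r^2) - a^2/(2*r^2) ≤ (s / r) * (u + 1/2) := by
      have h1 : b^2 - a^2 ≤ s * (2*a + s) := by nlinarith
      have h2 : s * (2*a + s) ≤ s * (2*a + r) := by nlinarith
      have heq : (s/r) * (a/r + 1/2) * (2*r^2) = s * (2*a + r) := by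
        field_simp
      rw [div_sub_div_same, div_le_iff₀ ht, hu, heq]
      linarith
    have hexp_eq : -(a^2)/(2*r^2) = -(u^2)/2 := by
      rw [hu, div_pow]; field_simp
    have hexp_eq2 : -(u^2)/8 ≤ -(β^2*a^2)/(2*r^2) := by
      rw [hu, neg_div, neg_div, neg_le_neg_iff]
      rw [div_le_div_iff₀ ht (by norm_num)]
      have : (a/r)^2 * (2*r^2) = 2 * a^2 := by field_simp
      rw [this]
      nlinarith [sq_nonneg a]
    calc Real.exp (-(a^2)/(2*r^2)) - Real.exp (-(b^2)/(2*r^2))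
        ≤ (b^2/(2*r^2) - a^2/(2*r^2)) * Real.exp (-(a^2)/(2*r^2)) := step1
      _ ≤ ((s / r) * (u + 1/2)) * Real.exp (-(a^2)/(2*r^2)) := by
          apply mul_le_mul_of_nonneg_right hfac (Real.exp_pos _).le
      _ = (s / r) * ((u + 1/2) * Real.exp (-(u^2)/2)) := by
          rw [hexp_eq]; ring
      _ ≤ (s / r) * (6 * Real.exp (-(u^2)/8)) := by
          apply mul_le_mul_of_nonneg_left (scalar_bound hu0)
          positivity
      _ ≤ 6 * (s / r) * Real.exp (-(β^2*a^2)/(2*r^2)) := by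
          have h6 : (0:ℝ) ≤ 6 * (s / r) := by positivity
          calc (s / r) * (6 * Real.exp (-(u^2)/8))
              = 6 * (s / r) * Real.exp (-(u^2)/8) := by ring
            _ ≤ 6 * (s / r) * Real.exp (-(β^2*a^2)/(2*r^2)) :=
              mul_le_mul_of_nonneg_left (Real.exp_le_exp.mpr hexp_eq2) h6

lemma key_sym {β t a b s : ℝ} (hβ : 0 < β) (hβ' : β ≤ 1/2) (ht : 0 < t)
    (ha : 0 ≤ a) (hb : 0 ≤ b) (hs : |a - b| ≤ s) :
    |Real.exp (-(a^2) / (2*t)) - Real.exp (-(b^2) / (2*t))| ≤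
      6 * min (s / Real.sqrt t) 1 *
        (Real.exp (-(β^2*a^2) / (2*t)) + Real.exp (-(β^2*b^2) / (2*t))) := by
  have hs0 : 0 ≤ s := (abs_nonneg _).trans hs
  have hmin : 0 ≤ min (s / Real.sqrt t) 1 :=
    le_min (div_nonneg hs0 (Real.sqrt_nonneg t)) zero_le_one
  rcases le_total a b with hab | hab
  · have h1 := key_aux (s := s) hβ hβ' ht ha hab (by rw [abs_sub_comm] at hs; exact (le_abs_self _).trans hs)
    have h2 : Real.exp (-(b^2)/(2*t)) ≤ Real.exp (-(a^2)/(2*t)) := by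
      apply Real.exp_le_exp.mpr
      rw [neg_div, neg_div, neg_le_neg_iff]
      gcongr <;> nlinarith
    rw [abs_of_nonneg (by linarith)]
    nlinarith [Real.exp_pos (-(β^2*b^2)/(2*t)), Real.exp_pos (-(β^2*a^2)/(2*t))]
  · have h1 := key_aux (s := s) hβ hβ' ht hb hab ((le_abs_self _).trans hs)
    have h2 : Real.exp (-(a^2)/(2*t)) ≤ Real.exp (-(b^2)/(2*t)) := by
      apply Real.exp_le_exp.mpr
      rw [neg_div, neg_div, neg_le_neg_iff]
      gcongr <;> nlinarith
    rw [abs_of_nonpos (by linarith)]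
    nlinarith [Real.exp_pos (-(β^2*b^2)/(2*t)), Real.exp_pos (-(β^2*a^2)/(2*t))]

/-- difference estimate for the Gaussian kernel on `ℝ^d`:
`|φ_n(x) − φ_n(y)| ≤ C min(|x−y|/√n, 1) Φ_n(βx, βy)`. -/
theorem gauss_diff_le (d : ℕ) (hd : 1 ≤ d) :
    ∃ β₀ > (0 : ℝ), ∀ β : ℝ, 0 < β → β ≤ β₀ →
      ∃ C > (0 : ℝ), ∀ n : ℕ, 1 ≤ n → ∀ x y : Fin d → ℝ,
        |gauss d n x - gauss d n y| ≤
          C * min (Real.sqrt (∑ i, (x i - y i) ^ 2) / Real.sqrt n) 1 *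
            (gauss d n (β • x) + gauss d n (β • y)) := by
  refine ⟨1/2, by norm_num, fun β hβ hβ' => ⟨6, by norm_num, fun n hn x y => ?_⟩⟩
  have ht : (0:ℝ) < (n:ℝ) := by exact_mod_cast Nat.lt_of_lt_of_le Nat.zero_lt_one hn
  set K : ℝ := (2 * Real.pi * (n:ℝ)) ^ (-(d:ℝ)/2) with hK
  have hKpos : 0 < K := Real.rpow_pos_of_pos (by positivity) _
  set a : ℝ := Real.sqrt (∑ i, (x i)^2) with hadef
  set b : ℝ := Real.sqrt (∑ i, (y i)^2) with hbdef
  set s : ℝ := Real.sqrt (∑ i, (x i - y i)^2) with hsdef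
  have ha0 : 0 ≤ a := Real.sqrt_nonneg _
  have hb0 : 0 ≤ b := Real.sqrt_nonneg _
  have ha2 : a^2 = ∑ i, (x i)^2 := Real.sq_sqrt (by positivity)
  have hb2 : b^2 = ∑ i, (y i)^2 := Real.sq_sqrt (by positivity)
  have hnorm : ∀ z : Fin d → ℝ,
      ‖(WithLp.equiv 2 (Fin d → ℝ)).symm z‖ = Real.sqrt (∑ i, (z i)^2) := by
    intro z
    rw [EuclideanSpace.norm_eq]
    congr 1
    refine Finset.sum_congr rfl fun i _ => ?_
    rw [WithLp.equiv_symm_apply, PiLp.toLp_apply, Real.norm_eq_abs, sq_abs]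
  have habs : |a - b| ≤ s := by
    have h1 : a = ‖(WithLp.equiv 2 (Fin d → ℝ)).symm x‖ := (hnorm x).symm
    have h2 : b = ‖(WithLp.equiv 2 (Fin d → ℝ)).symm y‖ := (hnorm y).symm
    have h3 : s = ‖(WithLp.equiv 2 (Fin d → ℝ)).symm x -
        (WithLp.equiv 2 (Fin d → ℝ)).symm y‖ := by
      rw [show (WithLp.equiv 2 (Fin d → ℝ)).symm x - (WithLp.equiv 2 (Fin d → ℝ)).symm y
            = (WithLp.equiv 2 (Fin d → ℝ)).symm (x - y) by rfl, hnorm]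
      simp [hsdef]
    rw [h1, h2, h3]
    exact abs_norm_sub_norm_le _ _
  have hgx : gauss d n x = K * Real.exp (-(a^2)/(2*(n:ℝ))) := by
    rw [gauss, ha2]
  have hgy : gauss d n y = K * Real.exp (-(b^2)/(2*(n:ℝ))) := by
    rw [gauss, hb2]
  have hsum : ∀ z : Fin d → ℝ, ∑ i, ((β • z) i)^2 = β^2 * ∑ i, (z i)^2 := by
    intro z
    rw [Finset.mul_sum]
    refine Finset.sum_congr rfl fun i _ => ?_
    simp [mul_pow]
  have hgbx : gauss d n (β • x) = K * Real.exp (-(β^2*a^2)/(2*(n:ℝ))) := by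
    rw [gauss, hsum, ha2]
  have hgby : gauss d n (β • y) = K * Real.exp (-(β^2*b^2)/(2*(n:ℝ))) := by
    rw [gauss, hsum, hb2]
  have main := key_sym (t := (n:ℝ)) (s := s) hβ hβ' ht ha0 hb0 habs
  calc |gauss d n x - gauss d n y|
      = K * |Real.exp (-(a^2)/(2*(n:ℝ))) - Real.exp (-(b^2)/(2*(n:ℝ)))| := by
        rw [hgx, hgy, ← mul_sub, abs_mul, abs_of_pos hKpos]
    _ ≤ K * (6 * min (s / Real.sqrt n) 1 *
          (Real.exp (-(β^2*a^2)/(2*(n:ℝ))) + Real.exp (-(β^2*b^2)/(2*(n:ℝ))))) :=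
        mul_le_mul_of_nonneg_left main hKpos.le
    _ = 6 * min (s / Real.sqrt n) 1 * (gauss d n (β • x) + gauss d n (β • y)) := by
        rw [hgbx, hgby]; ring
end

section
/- Let d ≥ 1 and let φ_t be the Gaussian kernel on R^d. Then there exists a constant C = C(d) > 0 such that for all integers m, l ≥ 1 and all x, y ∈ R^d: φ_m(x) φ_l(y) ≤ C (ml)^{−d/4} ( φ_{⌈2ml/(m+l)⌉}(x) + φ_{⌈2ml/(m+l)⌉}(y) ), where ⌈·⌉ denotes the ceiling function. -/
open scoped BigOperators

lemma gauss_nonneg (d : ℕ) (t : ℕ) (x : Fin d → ℝ) : 0 ≤ gauss d t x := by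
  unfold gauss
  have h : (0:ℝ) ≤ 2 * Real.pi * t := by positivity
  positivity

lemma gauss_mul_le_key (d : ℕ) (m l : ℕ) (hm : 1 ≤ m) (hl : 1 ≤ l) (hml : m ≤ l)
    (x y : Fin d → ℝ) :
    gauss d m x * gauss d l y ≤
      ((m : ℝ) * l) ^ (-(d : ℝ) / 4) *
        gauss d (⌈(2 * (m : ℝ) * l) / ((m : ℝ) + l)⌉₊ : ℕ) x := by
  have hm' : (1:ℝ) ≤ m := by exact_mod_cast hm
  have hl' : (1:ℝ) ≤ l := by exact_mod_cast hl
  have hml' : (m:ℝ) ≤ l := by exact_mod_cast hml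
  set h : ℝ := (2 * (m : ℝ) * l) / ((m : ℝ) + l) with hh
  set t : ℕ := ⌈h⌉₊ with htdef
  have hmlpos : (0:ℝ) < (m:ℝ) * l := by positivity
  have hsum : (0:ℝ) < (m:ℝ) + l := by linarith
  have hhm : (m:ℝ) ≤ h := by
    rw [hh, le_div_iff₀ hsum]; nlinarith
  have htm : (m:ℝ) ≤ t := le_trans hhm (Nat.le_ceil h)
  have ht1 : (1:ℝ) ≤ t := le_trans hm' htm
  set s : ℝ := Real.sqrt ((m:ℝ) * l) with hs
  have hsq : s * s = (m:ℝ) * l := Real.mul_self_sqrt hmlpos.le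
  have hspos : 0 < s := Real.sqrt_pos.2 hmlpos
  have hamgm : 2 * s ≤ (m:ℝ) + l := by nlinarith [sq_nonneg ((m:ℝ) - l), sq_nonneg (2 * s - ((m:ℝ) + l))]
  have hhs : h ≤ s := by
    rw [hh, div_le_iff₀ hsum]; nlinarith
  have hts : (t:ℝ) ≤ 2 * s := by
    have h1 : (t:ℝ) < h + 1 := Nat.ceil_lt_add_one (by linarith : (0:ℝ) ≤ h)
    have h2 : (1:ℝ) ≤ h := le_trans hm' hhm
    linarith
  have hpi := Real.pi_gt_three
  -- coefficient inequality
  have hcoef : (2 * Real.pi * m) ^ (-(d:ℝ)/2) * (2 * Real.pi * l) ^ (-(d:ℝ)/2)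
      ≤ ((m:ℝ) * l) ^ (-(d:ℝ)/4) * (2 * Real.pi * t) ^ (-(d:ℝ)/2) := by
    have e1 : ((m:ℝ) * l) ^ (-(d:ℝ)/4) = s ^ (-(d:ℝ)/2) := by
      rw [← hsq, Real.mul_rpow hspos.le hspos.le, ← Real.rpow_add hspos]
      ring_nf
    rw [e1, ← Real.mul_rpow (by positivity) (by positivity),
        ← Real.mul_rpow hspos.le (by positivity)]
    apply Real.rpow_le_rpow_of_nonpos
    · positivity
    · have hss : 0 < s * s := mul_pos hspos hspos
      have h1 : s * (2 * Real.pi * ↑t) ≤ s * (2 * Real.pi * (2 * s)) := by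
        have hp : (0:ℝ) ≤ s * (2 * Real.pi) := by positivity
        nlinarith [mul_le_mul_of_nonneg_left hts hp]
      have h2 : s * (2 * Real.pi * (2 * s)) ≤ 2 * Real.pi * ↑m * (2 * Real.pi * ↑l) := by
        rw [show 2 * Real.pi * (m:ℝ) * (2 * Real.pi * l) = 4 * Real.pi ^ 2 * ((m:ℝ) * l) by ring,
            ← hsq]
        nlinarith [mul_pos Real.pi_pos hss]
      linarith
    · have hd0 : (0:ℝ) ≤ d := Nat.cast_nonneg d
      linarith
  -- exponential inequalities
  have hS : (0:ℝ) ≤ ∑ i, (x i) ^ 2 := by positivity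
  have hT : (0:ℝ) ≤ ∑ i, (y i) ^ 2 := by positivity
  have hexp1 : Real.exp (-(∑ i, (x i) ^ 2) / (2 * m)) ≤ Real.exp (-(∑ i, (x i) ^ 2) / (2 * t)) := by
    apply Real.exp_le_exp.2
    rw [div_le_div_iff₀ (by positivity) (by positivity)]
    nlinarith
  have hexp2 : Real.exp (-(∑ i, (y i) ^ 2) / (2 * l)) ≤ 1 := by
    apply Real.exp_le_one_iff.2
    apply div_nonpos_of_nonpos_of_nonneg <;> [linarith; positivity]
  unfold gauss
  calc (2 * Real.pi * m) ^ (-(d:ℝ)/2) * Real.exp (-(∑ i, (x i) ^ 2) / (2 * m)) *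
        ((2 * Real.pi * l) ^ (-(d:ℝ)/2) * Real.exp (-(∑ i, (y i) ^ 2) / (2 * l)))
      ≤ (2 * Real.pi * m) ^ (-(d:ℝ)/2) * Real.exp (-(∑ i, (x i) ^ 2) / (2 * t)) *
        ((2 * Real.pi * l) ^ (-(d:ℝ)/2) * 1) := by
        gcongr
    _ = (2 * Real.pi * m) ^ (-(d:ℝ)/2) * (2 * Real.pi * l) ^ (-(d:ℝ)/2) *
        Real.exp (-(∑ i, (x i) ^ 2) / (2 * t)) := by ring
    _ ≤ ((m:ℝ) * l) ^ (-(d:ℝ)/4) * (2 * Real.pi * t) ^ (-(d:ℝ)/2) *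
        Real.exp (-(∑ i, (x i) ^ 2) / (2 * t)) := by
        gcongr
    _ = ((m:ℝ) * l) ^ (-(d:ℝ)/4) *
        ((2 * Real.pi * t) ^ (-(d:ℝ)/2) * Real.exp (-(∑ i, (x i) ^ 2) / (2 * t))) := by ring

/-- product of Gaussian kernels:
`φ_m(x) φ_l(y) ≤ C (ml)^{−d/4} (φ_{⌈2ml/(m+l)⌉}(x) + φ_{⌈2ml/(m+l)⌉}(y))`. -/
theorem gauss_mul_le (d : ℕ) (hd : 1 ≤ d) :
    ∃ C > (0 : ℝ), ∀ m l : ℕ, 1 ≤ m → 1 ≤ l → ∀ x y : Fin d → ℝ,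
      gauss d m x * gauss d l y ≤
        C * ((m : ℝ) * l) ^ (-(d : ℝ) / 4) *
          (gauss d (⌈(2 * (m : ℝ) * l) / ((m : ℝ) + l)⌉₊ : ℕ) x +
           gauss d (⌈(2 * (m : ℝ) * l) / ((m : ℝ) + l)⌉₊ : ℕ) y) := by
  refine ⟨1, one_pos, ?_⟩
  intro m l hm hl x y
  rw [one_mul]
  rcases le_total m l with hml | hlm
  · have hkey := gauss_mul_le_key d m l hm hl hml x y
    have hp : (0:ℝ) ≤ ((m:ℝ) * l) ^ (-(d:ℝ)/4) := Real.rpow_nonneg (by positivity) _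
    have hgy := gauss_nonneg d (⌈(2 * (m : ℝ) * l) / ((m : ℝ) + l)⌉₊) y
    calc gauss d m x * gauss d l y
        ≤ ((m : ℝ) * l) ^ (-(d : ℝ) / 4) *
            gauss d (⌈(2 * (m : ℝ) * l) / ((m : ℝ) + l)⌉₊ : ℕ) x := hkey
      _ ≤ _ := mul_le_mul_of_nonneg_left (le_add_of_nonneg_right hgy) hp
  · have hkey := gauss_mul_le_key d l m hl hm hlm y x
    have hbase : (2 * (l : ℝ) * m) / ((l : ℝ) + m) = (2 * (m : ℝ) * l) / ((m : ℝ) + l) := by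
      ring_nf
    rw [hbase, mul_comm (l:ℝ) m] at hkey
    have hp : (0:ℝ) ≤ ((m:ℝ) * l) ^ (-(d:ℝ)/4) := Real.rpow_nonneg (by positivity) _
    have hgx := gauss_nonneg d (⌈(2 * (m : ℝ) * l) / ((m : ℝ) + l)⌉₊) x
    calc gauss d m x * gauss d l y = gauss d l y * gauss d m x := mul_comm _ _
      _ ≤ ((m : ℝ) * l) ^ (-(d : ℝ) / 4) *
            gauss d (⌈(2 * (m : ℝ) * l) / ((m : ℝ) + l)⌉₊ : ℕ) y := hkey
      _ ≤ _ := mul_le_mul_of_nonneg_left (le_add_of_nonneg_left hgx) hp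
end

section
/- Let d ≥ 1, β > 0, and let φ_n be the Gaussian kernel on R^d. Then there exists a constant C = C(β, d) > 0 such that for all integers i, j ≥ 1 and all x ∈ Z^d: Σ_{y∈Z^d} φ_i(βy) φ_j(β(x − y)) ≤ C φ_{i+j}(βx/2). -/
open scoped BigOperators

set_option maxHeartbeats 1000000

open Real Finset

open Real Finset

lemma one_dim_summable_nat {c : ℝ} (hc : 0 < c) :
    (∀ N : ℕ, ∑ n ∈ Finset.range N, Real.exp (-c * ((n:ℝ)+1)^2) ≤ Real.sqrt (Real.pi / c)) := by
  intro N
  have hmono : AntitoneOn (fun x : ℝ => Real.exp (-c * x^2)) (Set.Icc (0:ℝ) (0 + (N:ℝ))) := by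
    intro a ha b hb hab
    dsimp only
    apply Real.exp_le_exp.2
    have h : a^2 ≤ b^2 := by nlinarith [ha.1]
    nlinarith [mul_le_mul_of_nonneg_left h hc.le]
  have h1 := hmono.sum_le_integral
  simp only [zero_add] at h1
  have h2 : (∫ x in (0:ℝ)..(N:ℝ), Real.exp (-c * x^2)) ≤ Real.sqrt (Real.pi / c) := by
    rw [intervalIntegral.integral_of_le (by positivity)]
    have h3 : (∫ x in Set.Ioc (0:ℝ) (N:ℝ), Real.exp (-c * x^2))
        ≤ ∫ x in Set.Ioi (0:ℝ), Real.exp (-c * x^2) := by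
      apply MeasureTheory.setIntegral_mono_set
      · exact (integrable_exp_neg_mul_sq hc).integrableOn
      · filter_upwards with x using Real.exp_nonneg _
      · filter_upwards with x hx using hx.1
    rw [integral_gaussian_Ioi] at h3
    have hnn : (0:ℝ) ≤ Real.sqrt (Real.pi / c) := Real.sqrt_nonneg _
    linarith
  calc ∑ n ∈ Finset.range N, Real.exp (-c * ((n:ℝ)+1)^2)
      ≤ ∫ x in (0:ℝ)..(N:ℝ), Real.exp (-c * x^2) := by
        refine le_trans (le_of_eq ?_) h1
        apply Finset.sum_congr rfl
        intro n _
        push_cast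
        ring_nf
    _ ≤ _ := h2

lemma one_dim_tail_summable {c : ℝ} (hc : 0 < c) :
    Summable (fun n : ℕ => Real.exp (-c * ((n:ℝ)+1)^2)) :=
  summable_of_sum_range_le (fun n => Real.exp_nonneg _) (one_dim_summable_nat hc)

lemma one_dim_summable_nat' {c : ℝ} (hc : 0 < c) :
    Summable (fun n : ℕ => Real.exp (-c * (n:ℝ)^2)) := by
  rw [← summable_nat_add_iff 1]
  convert one_dim_tail_summable hc using 2 with n
  case e'_5 => push_cast; ring_nf
  all_goals rfl

lemma one_dim_summable_int {c : ℝ} (hc : 0 < c) :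
    Summable (fun k : ℤ => Real.exp (-c * (k:ℝ)^2)) := by
  apply Summable.of_nat_of_neg_add_one
  · exact_mod_cast one_dim_summable_nat' hc
  · convert one_dim_tail_summable hc using 2 with n
    push_cast; ring_nf

lemma one_dim_tsum_le {c : ℝ} (hc : 0 < c) :
    ∑' k : ℤ, Real.exp (-c * (k:ℝ)^2) ≤ 1 + 2 * Real.sqrt (Real.pi / c) := by
  have htail : ∑' n : ℕ, Real.exp (-c * ((n:ℝ)+1)^2) ≤ Real.sqrt (Real.pi / c) :=
    Real.tsum_le_of_sum_range_le (fun n => Real.exp_nonneg _) (one_dim_summable_nat hc)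
  have h1 : Summable (fun n : ℕ => Real.exp (-c * ((n:ℕ):ℝ)^2)) := one_dim_summable_nat' hc
  have h2 : Summable (fun n : ℕ => Real.exp (-c * ((-((n:ℤ)+1)):ℝ)^2)) := by
    convert one_dim_tail_summable hc using 2 with n
    push_cast; ring_nf
  rw [tsum_of_nat_of_neg_add_one (by exact_mod_cast h1) (by exact_mod_cast h2)]
  have e0 : ∑' n : ℕ, Real.exp (-c * ((n:ℕ):ℝ)^2)
      = 1 + ∑' n : ℕ, Real.exp (-c * ((n:ℝ)+1)^2) := by
    rw [Summable.tsum_eq_zero_add (by exact_mod_cast h1)]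
    norm_num
  have e1 : ∑' n : ℕ, Real.exp (-c * (-((n:ℝ)+1))^2)
      = ∑' n : ℕ, Real.exp (-c * ((n:ℝ)+1)^2) := by
    apply tsum_congr; intro n; rw [neg_sq]
  push_cast
  push_cast at e0
  rw [e0, e1]
  linarith

lemma pi_prod_summable_tsum (d : ℕ) (h : ℤ → ℝ) (h0 : ∀ k, 0 ≤ h k) (hs : Summable h) :
    Summable (fun y : Fin d → ℤ => ∏ i, h (y i)) ∧
    ∑' y : Fin d → ℤ, ∏ i, h (y i) = (∑' k, h k)^d := by
  induction d with
  | zero =>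
    constructor
    · exact Summable.of_finite
    · rw [tsum_eq_single (fun i => 0) (fun b hb => absurd (Subsingleton.elim b _) hb)]
      simp
  | succ n ih =>
    obtain ⟨ihs, iht⟩ := ih
    let e := Fin.consEquiv (fun _ : Fin (n+1) => ℤ)
    have key : ∀ p : ℤ × (Fin n → ℤ), (∏ i, h ((e p) i)) = h p.1 * ∏ i, h (p.2 i) := by
      intro p
      rw [Fin.prod_univ_succ]
      simp [e]
    have hprod : Summable (fun p : ℤ × (Fin n → ℤ) => h p.1 * ∏ i, h (p.2 i)) :=
      Summable.mul_of_nonneg (f := h) (g := fun y : Fin n → ℤ => ∏ i, h (y i))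
        hs ihs (fun k => h0 k) (fun y => Finset.prod_nonneg fun i _ => h0 _)
    constructor
    · refine (Equiv.summable_iff e).1 ?_
      have : ((fun y : Fin (n+1) → ℤ => ∏ i, h (y i)) ∘ e)
          = fun p : ℤ × (Fin n → ℤ) => h p.1 * ∏ i, h (p.2 i) := funext key
      rw [this]; exact hprod
    · rw [← e.tsum_eq]
      calc ∑' p : ℤ × (Fin n → ℤ), ∏ i, h ((e p) i)
          = ∑' p : ℤ × (Fin n → ℤ), h p.1 * ∏ i, h (p.2 i) := tsum_congr key
        _ = (∑' k, h k) * ∑' y : Fin n → ℤ, ∏ i, h (y i) := (Summable.tsum_mul_tsum hs ihs hprod).symm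
        _ = (∑' k, h k)^(n+1) := by rw [iht]; ring

lemma exp_bound_aux (A B X s t : ℝ) (hA : 0 ≤ A) (hB : 0 ≤ B) (hX : 0 ≤ X)
    (hs : 0 < s) (ht : 0 < t) (hc : X*(s*t) ≤ (A*t+B*s)*(s+t)) :
    (-A)/(2*s) + (-B)/(2*t) ≤ (-(X/4))/(2*(s+t)) + (-(A/(4*s))) := by
  have hst : 0 < s + t := by linarith
  rw [show -(A/(4*s)) = (-A)/(4*s) by ring]
  rw [div_add_div _ _ (by positivity) (by positivity),
    div_add_div _ _ (by positivity) (by positivity),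
    div_le_div_iff₀ (by positivity) (by positivity)]
  nlinarith [mul_pos hs ht, mul_nonneg (mul_nonneg hA ht.le) hst.le,
    mul_nonneg (mul_nonneg hB hs.le) hst.le,
    mul_le_mul_of_nonneg_left hc hs.le, mul_pos (mul_pos hs hs) ht,
    mul_nonneg (mul_nonneg (mul_nonneg hA ht.le) hst.le) hs.le,
    mul_nonneg (mul_nonneg (mul_nonneg hB hs.le) hst.le) hs.le]

lemma coord_cauchy (s t : ℝ) (hs : 0 < s) (ht : 0 < t) (u v : ℝ) :
    (u+v)^2*(s*t) ≤ (u^2*t+v^2*s)*(s+t) := by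
  nlinarith [sq_nonneg (t*u - s*v), mul_pos hs ht]

lemma prefactor_le (d : ℕ) (A₀ : ℝ) (hA₀ : 0 < A₀) (s t : ℝ)
    (hs1 : 1 ≤ s) (ht1 : 1 ≤ t) (hst : s ≤ t) :
    (2*Real.pi*s)^(-(d:ℝ)/2) * (2*Real.pi*t)^(-(d:ℝ)/2) * (A₀*Real.sqrt s)^d
      ≤ ((2*Real.pi)^(-(d:ℝ)/2) * (2:ℝ)^((d:ℝ)/2) * A₀^d) * (2*Real.pi*(s+t))^(-(d:ℝ)/2) := by
  have hs0 : (0:ℝ) < s := by linarith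
  have ht0 : (0:ℝ) < t := by linarith
  have hπ : (0:ℝ) < 2*Real.pi := by positivity
  have he : -(d:ℝ)/2 ≤ 0 := by
    have : (0:ℝ) ≤ (d:ℝ) := Nat.cast_nonneg d
    linarith
  have hsd : s^(-(d:ℝ)/2) * (Real.sqrt s)^d = 1 := by
    rw [Real.sqrt_eq_rpow, ← Real.rpow_natCast (s^((1:ℝ)/2)) d,
      ← Real.rpow_mul hs0.le, ← Real.rpow_add hs0,
      show -(d:ℝ)/2 + (1:ℝ)/2 * (d:ℝ) = 0 by ring, Real.rpow_zero]
  have h2me : (2:ℝ)^((d:ℝ)/2) * (2:ℝ)^(-(d:ℝ)/2) = 1 := by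
    rw [← Real.rpow_add (by norm_num), show (d:ℝ)/2 + -(d:ℝ)/2 = 0 by ring, Real.rpow_zero]
  have h2t : (2*t)^(-(d:ℝ)/2) ≤ (s+t)^(-(d:ℝ)/2) :=
    Real.rpow_le_rpow_of_nonpos (by linarith) (by linarith) he
  calc (2*Real.pi*s)^(-(d:ℝ)/2) * (2*Real.pi*t)^(-(d:ℝ)/2) * (A₀*Real.sqrt s)^d
      = ((2*Real.pi)^(-(d:ℝ)/2) * (2*Real.pi)^(-(d:ℝ)/2) * A₀^d * t^(-(d:ℝ)/2))
          * (s^(-(d:ℝ)/2) * (Real.sqrt s)^d) := by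
        rw [Real.mul_rpow hπ.le hs0.le, Real.mul_rpow hπ.le ht0.le, mul_pow]; ring
    _ = (2*Real.pi)^(-(d:ℝ)/2) * (2*Real.pi)^(-(d:ℝ)/2) * A₀^d * t^(-(d:ℝ)/2) := by
        rw [hsd, mul_one]
    _ = ((2*Real.pi)^(-(d:ℝ)/2) * (2:ℝ)^((d:ℝ)/2) * A₀^d)
          * ((2*Real.pi)^(-(d:ℝ)/2) * (2*t)^(-(d:ℝ)/2)) := by
        rw [Real.mul_rpow (by norm_num) ht0.le]
        linear_combination (-((2*Real.pi)^(-(d:ℝ)/2) * (2*Real.pi)^(-(d:ℝ)/2) * A₀^d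
          * t^(-(d:ℝ)/2))) * h2me
    _ ≤ ((2*Real.pi)^(-(d:ℝ)/2) * (2:ℝ)^((d:ℝ)/2) * A₀^d)
          * ((2*Real.pi)^(-(d:ℝ)/2) * (s+t)^(-(d:ℝ)/2)) := by
        have c1 : (0:ℝ) < (2*Real.pi)^(-(d:ℝ)/2) := Real.rpow_pos_of_pos hπ _
        exact mul_le_mul_of_nonneg_left (mul_le_mul_of_nonneg_left h2t c1.le) (by positivity)
    _ = ((2*Real.pi)^(-(d:ℝ)/2) * (2:ℝ)^((d:ℝ)/2) * A₀^d) * (2*Real.pi*(s+t))^(-(d:ℝ)/2) := by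
        rw [Real.mul_rpow hπ.le (by linarith)]

lemma S1_le (β : ℝ) (hβ : 0 < β) (s : ℝ) (hs1 : 1 ≤ s) :
    ∑' k : ℤ, Real.exp (-(β^2/(4*s)) * (k:ℝ)^2)
      ≤ (1 + 2*Real.sqrt (4*Real.pi/β^2)) * Real.sqrt s := by
  have hs0 : (0:ℝ) < s := by linarith
  have hc : 0 < β^2/(4*s) := by positivity
  have h1 := one_dim_tsum_le hc
  have h2 : Real.pi / (β^2/(4*s)) = (4*Real.pi/β^2) * s := by
    field_simp
  rw [h2, Real.sqrt_mul (by positivity)] at h1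
  have h3 : 1 ≤ Real.sqrt s := by
    rw [show (1:ℝ) = Real.sqrt 1 by simp]
    exact Real.sqrt_le_sqrt hs1
  nlinarith [Real.sqrt_nonneg (4*Real.pi/β^2)]

theorem main_aux (d : ℕ) (β : ℝ) (hβ : 0 < β) :
    ∃ C > (0 : ℝ), ∀ i j : ℕ, 1 ≤ i → 1 ≤ j → i ≤ j → ∀ x : Fin d → ℤ,
      (∑' y : Fin d → ℤ, gauss d i (β • toRealVec y) * gauss d j (β • toRealVec (x - y)))
        ≤ C * gauss d (i + j) ((β / 2) • toRealVec x) := by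
  set A₀ := 1 + 2*Real.sqrt (4*Real.pi/β^2) with hA₀def
  have hA₀ : 0 < A₀ := by positivity
  refine ⟨(2*Real.pi)^(-(d:ℝ)/2) * (2:ℝ)^((d:ℝ)/2) * A₀^d, by positivity, ?_⟩
  intro i j hi hj hij x
  set s := (i:ℝ) with hsdef
  set t := (j:ℝ) with htdef
  have hs1 : (1:ℝ) ≤ s := by rw [hsdef]; exact_mod_cast hi
  have ht1 : (1:ℝ) ≤ t := by rw [htdef]; exact_mod_cast hj
  have hst : s ≤ t := by rw [hsdef, htdef]; exact_mod_cast hij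
  have hs0 : (0:ℝ) < s := by linarith
  have ht0 : (0:ℝ) < t := by linarith
  set c := β^2/(4*s) with hcdef
  have hc : 0 < c := by positivity
  set X4 := ∑ k, ((β/2) * ((x k : ℝ)))^2 with hX4def
  set X := ∑ k, (β * ((x k : ℝ)))^2 with hXdef
  have hX4X : X4 = X/4 := by
    rw [hX4def, hXdef, Finset.sum_div]
    exact Finset.sum_congr rfl (fun k _ => by ring)
  have hXnn : 0 ≤ X := Finset.sum_nonneg (fun k _ => sq_nonneg _)
  set M := (2*Real.pi*s)^(-(d:ℝ)/2) * (2*Real.pi*t)^(-(d:ℝ)/2)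
      * Real.exp ((-X4)/(2*(s+t))) with hMdef
  set h : ℤ → ℝ := fun k => Real.exp (-c * (k:ℝ)^2) with hhdef
  obtain ⟨hgs, hgt⟩ := pi_prod_summable_tsum d h (fun k => Real.exp_nonneg _)
    (one_dim_summable_int hc)
  have hpt : ∀ y : Fin d → ℤ, gauss d i (β • toRealVec y) * gauss d j (β • toRealVec (x - y))
      ≤ M * ∏ k, h (y k) := by
    intro y
    set A := ∑ k, (β * ((y k : ℝ)))^2 with hAdef
    set B := ∑ k, (β * (((x k : ℝ)) - ((y k : ℝ))))^2 with hBdef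
    have hAnn : 0 ≤ A := Finset.sum_nonneg fun k _ => sq_nonneg _
    have hBnn : 0 ≤ B := Finset.sum_nonneg fun k _ => sq_nonneg _
    have lhs_eq : gauss d i (β • toRealVec y) * gauss d j (β • toRealVec (x - y))
        = (2*Real.pi*s)^(-(d:ℝ)/2) * (2*Real.pi*t)^(-(d:ℝ)/2)
            * Real.exp ((-A)/(2*s) + (-B)/(2*t)) := by
      simp only [gauss, Pi.smul_apply, toRealVec, smul_eq_mul, Pi.sub_apply, Int.cast_sub]
      rw [Real.exp_add, ← hAdef, ← hBdef]
      ring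
    have hprod_eq : (∏ k, h (y k)) = Real.exp (-(c * ∑ k, ((y k : ℝ))^2)) := by
      rw [hhdef]
      rw [← Real.exp_sum]
      congr 1
      rw [Finset.mul_sum, ← Finset.sum_neg_distrib]
      exact Finset.sum_congr rfl (fun k _ => by ring)
    have hcauchy : X*(s*t) ≤ (A*t+B*s)*(s+t) := by
      calc X*(s*t) = ∑ k, (β*((x k:ℝ)))^2*(s*t) := by rw [hXdef, Finset.sum_mul]
        _ ≤ ∑ k, ((β*((y k:ℝ)))^2*t + (β*(((x k:ℝ))-((y k:ℝ))))^2*s)*(s+t) := by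
            apply Finset.sum_le_sum
            intro k _
            have hco := coord_cauchy s t hs0 ht0 (β*((y k:ℝ))) (β*(((x k:ℝ))-((y k:ℝ))))
            calc (β*((x k:ℝ)))^2*(s*t)
                = (β*((y k:ℝ)) + β*(((x k:ℝ))-((y k:ℝ))))^2*(s*t) := by ring
              _ ≤ _ := hco
        _ = (A*t+B*s)*(s+t) := by
            rw [eq_comm, hAdef, hBdef, Finset.sum_mul, Finset.sum_mul,
              ← Finset.sum_add_distrib, Finset.sum_mul]
    have hAeq : A/(4*s) = c * (∑ k, ((y k:ℝ))^2) := by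
      have hA2 : A = β^2 * ∑ k, ((y k:ℝ))^2 := by
        rw [hAdef, Finset.mul_sum]
        exact Finset.sum_congr rfl (fun k _ => by ring)
      rw [hA2, hcdef]
      field_simp
    have hkey := exp_bound_aux A B X s t hAnn hBnn hXnn hs0 ht0 hcauchy
    rw [lhs_eq, hMdef, hprod_eq]
    have comb : (2*Real.pi*s)^(-(d:ℝ)/2) * (2*Real.pi*t)^(-(d:ℝ)/2)
          * Real.exp ((-X4)/(2*(s+t))) * Real.exp (-(c * ∑ k, ((y k:ℝ))^2))
        = ((2*Real.pi*s)^(-(d:ℝ)/2) * (2*Real.pi*t)^(-(d:ℝ)/2))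
          * Real.exp ((-X4)/(2*(s+t)) + -(c * ∑ k, ((y k:ℝ))^2)) := by
      rw [Real.exp_add]; ring
    rw [comb, show (2*Real.pi*s)^(-(d:ℝ)/2) * (2*Real.pi*t)^(-(d:ℝ)/2)
        * Real.exp ((-A)/(2*s) + (-B)/(2*t))
      = ((2*Real.pi*s)^(-(d:ℝ)/2) * (2*Real.pi*t)^(-(d:ℝ)/2))
        * Real.exp ((-A)/(2*s) + (-B)/(2*t)) from by ring]
    apply mul_le_mul_of_nonneg_left _ (by positivity)
    apply Real.exp_le_exp.2
    rw [hX4X, ← hAeq]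
    exact hkey
  have hMg : Summable (fun y : Fin d → ℤ => M * ∏ k, h (y k)) := hgs.mul_left M
  have hnn : ∀ y : Fin d → ℤ,
      0 ≤ gauss d i (β • toRealVec y) * gauss d j (β • toRealVec (x - y)) := by
    intro y
    have g1 : (0:ℝ) ≤ gauss d i (β • toRealVec y) := by
      unfold gauss
      have : (0:ℝ) ≤ 2*Real.pi*s := by positivity
      positivity
    have g2 : (0:ℝ) ≤ gauss d j (β • toRealVec (x - y)) := by
      unfold gauss
      have : (0:ℝ) ≤ 2*Real.pi*t := by positivity
      positivity
    exact mul_nonneg g1 g2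
  have hsum_le := Summable.tsum_le_tsum hpt (Summable.of_nonneg_of_le hnn hpt hMg) hMg
  rw [tsum_mul_left, hgt] at hsum_le
  have hS1 : ∑' k : ℤ, h k ≤ A₀ * Real.sqrt s := by
    rw [hhdef, hcdef, hA₀def]
    exact S1_le β hβ s hs1
  have hS1nn : 0 ≤ ∑' k : ℤ, h k := tsum_nonneg (fun k => Real.exp_nonneg _)
  have hpow : (∑' k : ℤ, h k)^d ≤ (A₀ * Real.sqrt s)^d := pow_le_pow_left₀ hS1nn hS1 d
  have rhs_eq : gauss d (i+j) ((β/2) • toRealVec x)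
      = (2*Real.pi*(s+t))^(-(d:ℝ)/2) * Real.exp ((-X4)/(2*(s+t))) := by
    simp only [gauss, Pi.smul_apply, toRealVec, smul_eq_mul]
    rfl

  have hE : (0:ℝ) ≤ Real.exp ((-X4)/(2*(s+t))) := Real.exp_nonneg _
  have final : M * (∑' k : ℤ, h k)^d
      ≤ ((2*Real.pi)^(-(d:ℝ)/2) * (2:ℝ)^((d:ℝ)/2) * A₀^d)
          * gauss d (i+j) ((β/2) • toRealVec x) := by
    rw [rhs_eq, hMdef]
    calc (2*Real.pi*s)^(-(d:ℝ)/2) * (2*Real.pi*t)^(-(d:ℝ)/2)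
          * Real.exp ((-X4)/(2*(s+t))) * (∑' k : ℤ, h k)^d
        = ((2*Real.pi*s)^(-(d:ℝ)/2) * (2*Real.pi*t)^(-(d:ℝ)/2) * (∑' k : ℤ, h k)^d)
            * Real.exp ((-X4)/(2*(s+t))) := by ring
      _ ≤ ((2*Real.pi*s)^(-(d:ℝ)/2) * (2*Real.pi*t)^(-(d:ℝ)/2) * (A₀ * Real.sqrt s)^d)
            * Real.exp ((-X4)/(2*(s+t))) := by
          apply mul_le_mul_of_nonneg_right _ hE
          apply mul_le_mul_of_nonneg_left hpow (by positivity)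
      _ ≤ (((2*Real.pi)^(-(d:ℝ)/2) * (2:ℝ)^((d:ℝ)/2) * A₀^d) * (2*Real.pi*(s+t))^(-(d:ℝ)/2))
            * Real.exp ((-X4)/(2*(s+t))) :=
          mul_le_mul_of_nonneg_right (prefactor_le d A₀ hA₀ s t hs1 ht1 hst) hE
      _ = ((2*Real.pi)^(-(d:ℝ)/2) * (2:ℝ)^((d:ℝ)/2) * A₀^d)
            * ((2*Real.pi*(s+t))^(-(d:ℝ)/2) * Real.exp ((-X4)/(2*(s+t)))) := by ring
  exact hsum_le.trans final

/-- Gaussian lattice convolution bound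
`Σ_y φ_i(βy) φ_j(β(x−y)) ≤ C φ_{i+j}(βx/2)`. -/
theorem gauss_lattice_conv_le (d : ℕ) (hd : 1 ≤ d) (β : ℝ) (hβ : 0 < β) :
    ∃ C > (0 : ℝ), ∀ i j : ℕ, 1 ≤ i → 1 ≤ j → ∀ x : Fin d → ℤ,
      (∑' y : Fin d → ℤ, gauss d i (β • toRealVec y) * gauss d j (β • toRealVec (x - y)))
        ≤ C * gauss d (i + j) ((β / 2) • toRealVec x) := by
  obtain ⟨C, hC, hmain⟩ := main_aux d β hβ
  refine ⟨C, hC, ?_⟩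
  intro i j hi hj x
  rcases le_total i j with hij | hij
  · exact hmain i j hi hj hij x
  · have hswap : (∑' y : Fin d → ℤ,
        gauss d i (β • toRealVec y) * gauss d j (β • toRealVec (x - y)))
        = ∑' y : Fin d → ℤ, gauss d j (β • toRealVec y) * gauss d i (β • toRealVec (x - y)) := by
      rw [← (Equiv.subLeft x).tsum_eq
        (fun y => gauss d j (β • toRealVec y) * gauss d i (β • toRealVec (x - y)))]
      apply tsum_congr
      intro y
      simp only [Equiv.subLeft_apply, sub_sub_cancel]
      ring
    rw [hswap]
    have hres := hmain j i hj hi hij x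
    rwa [show ((j:ℝ) + (i:ℝ)) = ((i:ℝ) + (j:ℝ)) from add_comm _ _] at hres
end

section
/- Let d = 3, let φ_n be the Gaussian kernel on R³, and fix β > 0 and C₁ > 0. Then there exists C₃ > 0 such that for all integers k, n ≥ 1 and all pairs x, y ∈ Z³ with |x − y| ≥ C₁ k^{1/6}: √k · φ_n(β(x − y)) ≤ C₃ Σ_{z∈Z³, |z−y| ≤ C₁ k^{1/6}} φ_n(β(x − z)). -/
open scoped BigOperators

private lemma exp_cube_aux (x : ℝ) (hx : 0 ≤ x) : x ^ 3 / 27 ≤ Real.exp x := by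
  have h1 : x / 3 ≤ Real.exp (x / 3) := by
    have := Real.add_one_le_exp (x / 3); linarith
  have h0 : (0:ℝ) ≤ x / 3 := by linarith
  have h2 : (x / 3) ^ 3 ≤ Real.exp (x / 3) ^ 3 := pow_le_pow_left₀ h0 h1 3
  have h3 : Real.exp (x / 3) ^ 3 = Real.exp x := by
    rw [← Real.exp_nat_mul]; congr 1; push_cast; ring
  calc x ^ 3 / 27 = (x / 3) ^ 3 := by ring
    _ ≤ Real.exp (x / 3) ^ 3 := h2
    _ = Real.exp x := h3

private lemma key_real (r Mr : ℝ) (hr : 0 < r) (hM : r < Mr) (hM1 : 1 ≤ Mr) :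
    (Mr + 1) ^ 3 ≤ 13824 * r ^ 3 * Real.exp ((Mr - r) * Mr / (2 * r ^ 2)) := by
  set s := Mr / r with hs
  have hs1 : 1 < s := (one_lt_div hr).2 hM
  have hMr : Mr = s * r := by rw [hs]; field_simp
  have hexp_arg : (Mr - r) * Mr / (2 * r ^ 2) = (s ^ 2 - s) / 2 := by
    field_simp [hMr]; rw [hMr]; ring
  have h1 : Mr + 1 ≤ 2 * Mr := by linarith
  have h2' : (Mr + 1) ^ 3 ≤ (2 * Mr) ^ 3 := pow_le_pow_left₀ (by linarith) h1 3
  have h3 : (2 * Mr) ^ 3 = 8 * s ^ 3 * r ^ 3 := by rw [hMr]; ring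
  have hr3 : (0:ℝ) < r ^ 3 := pow_pos hr 3
  have hargnn : (0:ℝ) ≤ (s ^ 2 - s) / 2 := by
    nlinarith [mul_nonneg (by linarith : (0:ℝ) ≤ s - 1) (by linarith : (0:ℝ) ≤ s)]
  rw [hexp_arg]
  by_cases h2 : s ≤ 2
  · have hE : 1 ≤ Real.exp ((s ^ 2 - s) / 2) := Real.one_le_exp hargnn
    have h4 : s ^ 3 ≤ 8 := by nlinarith
    calc (Mr + 1) ^ 3 ≤ 8 * s ^ 3 * r ^ 3 := by linarith [h2', h3]
      _ ≤ 64 * r ^ 3 := by nlinarith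
      _ ≤ 13824 * r ^ 3 * Real.exp ((s ^ 2 - s) / 2) := by nlinarith
  · push_neg at h2
    have harg : s ^ 2 / 4 ≤ (s ^ 2 - s) / 2 := by nlinarith
    have hE : s ^ 6 / 1728 ≤ Real.exp ((s ^ 2 - s) / 2) := by
      calc s ^ 6 / 1728 = (s ^ 2 / 4) ^ 3 / 27 := by ring
        _ ≤ Real.exp (s ^ 2 / 4) := exp_cube_aux _ (by positivity)
        _ ≤ Real.exp ((s ^ 2 - s) / 2) := Real.exp_le_exp.2 harg
    have hu : (1:ℝ) ≤ s ^ 3 := by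
      nlinarith [mul_nonneg (by linarith : (0:ℝ) ≤ s - 1)
        (by nlinarith : (0:ℝ) ≤ s ^ 2 + s + 1)]
    have hu2 : s ^ 3 ≤ s ^ 6 := by nlinarith
    calc (Mr + 1) ^ 3 ≤ 8 * s ^ 3 * r ^ 3 := by linarith [h2', h3]
      _ ≤ 8 * s ^ 6 * r ^ 3 := by nlinarith
      _ = 13824 * (s ^ 6 / 1728) * r ^ 3 := by ring
      _ ≤ 13824 * Real.exp ((s ^ 2 - s) / 2) * r ^ 3 := by nlinarith
      _ = 13824 * r ^ 3 * Real.exp ((s ^ 2 - s) / 2) := by ring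

private lemma numeric_lemma (M : ℕ) (t : ℝ) (ht : 0 < t) :
    ((M:ℝ) + 1) ^ 3 ≤
      13824 * ((min M ⌊Real.sqrt t⌋₊ : ℕ) + 1 : ℝ) ^ 2 *
        ∑ j ∈ Finset.range (M + 1), Real.exp ((j : ℝ) * M / (2 * t)) := by
  set m : ℕ := min M ⌊Real.sqrt t⌋₊ with hm
  by_cases hcase : M ≤ ⌊Real.sqrt t⌋₊
  · have hmM : m = M := min_eq_left hcase
    have hsum : ((M:ℝ) + 1) ≤ ∑ j ∈ Finset.range (M + 1), Real.exp ((j:ℝ) * M / (2 * t)) := by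
      calc ((M:ℝ) + 1) = ∑ _j ∈ Finset.range (M + 1), (1:ℝ) := by simp
        _ ≤ _ := Finset.sum_le_sum fun j _ => Real.one_le_exp (by positivity)
    rw [hmM]
    have h0 : (0:ℝ) ≤ ((M:ℝ) + 1) ^ 2 := by positivity
    nlinarith [h0, hsum]
  · push_neg at hcase
    have hmfl : m = ⌊Real.sqrt t⌋₊ := min_eq_right hcase.le
    have hmMn : m + 1 ≤ M := by omega
    have hmM : (m:ℝ) + 1 ≤ (M:ℝ) := by exact_mod_cast hmMn
    set r := Real.sqrt t with hrdef
    have hr0 : 0 < r := Real.sqrt_pos.2 ht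
    have hr2 : r ^ 2 = t := Real.sq_sqrt ht.le
    have hmr : (m:ℝ) ≤ r := by
      rw [hmfl]; exact Nat.floor_le (Real.sqrt_nonneg t)
    have hrm : r < (m:ℝ) + 1 := by rw [hmfl]; exact Nat.lt_floor_add_one r
    have hrM : r < (M:ℝ) := by linarith
    have hM1 : (1:ℝ) ≤ (M:ℝ) := by
      have : 1 ≤ M := by omega
      exact_mod_cast this
    -- sum lower bound
    have hsub : Finset.Icc (M - m) M ⊆ Finset.range (M + 1) := by
      intro j hj
      rw [Finset.mem_range]
      have := (Finset.mem_Icc.1 hj).2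
      omega
    have hsum : ((m:ℝ) + 1) * Real.exp (((M:ℝ) - m) * M / (2 * t)) ≤
        ∑ j ∈ Finset.range (M + 1), Real.exp ((j:ℝ) * M / (2 * t)) := by
      have h2 : ∑ j ∈ Finset.Icc (M - m) M, Real.exp ((j:ℝ) * M / (2 * t)) ≤
          ∑ j ∈ Finset.range (M + 1), Real.exp ((j:ℝ) * M / (2 * t)) :=
        Finset.sum_le_sum_of_subset_of_nonneg hsub (fun _ _ _ => (Real.exp_pos _).le)
      refine le_trans ?_ h2
      have hcard : (Finset.Icc (M - m) M).card = m + 1 := by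
        rw [Nat.card_Icc]; omega
      calc ((m:ℝ) + 1) * Real.exp (((M:ℝ) - m) * M / (2 * t))
          = ∑ _j ∈ Finset.Icc (M - m) M, Real.exp (((M:ℝ) - m) * M / (2 * t)) := by
            rw [Finset.sum_const, hcard, nsmul_eq_mul]; push_cast; ring
        _ ≤ ∑ j ∈ Finset.Icc (M - m) M, Real.exp ((j:ℝ) * M / (2 * t)) := by
            refine Finset.sum_le_sum fun j hj => Real.exp_le_exp.2 ?_
            have hj1 : M - m ≤ j := (Finset.mem_Icc.1 hj).1
            have hj2 : ((M:ℝ) - m) ≤ (j:ℝ) := by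
              have := Nat.cast_le (α := ℝ) |>.2 hj1
              rwa [Nat.cast_sub (by omega)] at this
            have hMpos : (0:ℝ) ≤ (M:ℝ) := Nat.cast_nonneg M
            have h2t : (0:ℝ) < 2 * t := by linarith
            have hnum : ((M:ℝ) - m) * M ≤ (j:ℝ) * M := by nlinarith
            exact div_le_div_of_nonneg_right hnum h2t.le
    -- key inequality
    have hkey : ((M:ℝ) + 1) ^ 3 ≤
        13824 * ((m:ℝ) + 1) ^ 2 * (((m:ℝ) + 1) * Real.exp (((M:ℝ) - m) * M / (2 * t))) := by
      have hk := key_real r (M:ℝ) hr0 hrM hM1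
      have hmono : Real.exp (((M:ℝ) - r) * (M:ℝ) / (2 * r ^ 2)) ≤
          Real.exp (((M:ℝ) - m) * M / (2 * t)) := by
        apply Real.exp_le_exp.2
        rw [hr2]
        have h2t : (0:ℝ) < 2 * t := by linarith [hr2 ▸ (by positivity : (0:ℝ) < r ^ 2)]
        have h2t : (0:ℝ) < 2 * t := by linarith [hr2 ▸ (by positivity : (0:ℝ) < r ^ 2)]
        have hnum : ((M:ℝ) - r) * M ≤ ((M:ℝ) - m) * M := by nlinarith
        exact div_le_div_of_nonneg_right hnum h2t.le
      have hr3 : r ^ 3 ≤ ((m:ℝ) + 1) ^ 3 := pow_le_pow_left₀ hr0.le hrm.le 3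
      have hE : 0 < Real.exp (((M:ℝ) - m) * M / (2 * t)) := Real.exp_pos _
      have hE2 : 0 < Real.exp (((M:ℝ) - r) * (M:ℝ) / (2 * r ^ 2)) := Real.exp_pos _
      calc ((M:ℝ) + 1) ^ 3 ≤ 13824 * r ^ 3 * Real.exp (((M:ℝ) - r) * (M:ℝ) / (2 * r ^ 2)) := hk
        _ ≤ 13824 * ((m:ℝ) + 1) ^ 3 * Real.exp (((M:ℝ) - r) * (M:ℝ) / (2 * r ^ 2)) := by
            nlinarith
        _ ≤ 13824 * ((m:ℝ) + 1) ^ 3 * Real.exp (((M:ℝ) - m) * M / (2 * t)) := by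
            have : (0:ℝ) < ((m:ℝ) + 1) ^ 3 := by positivity
            nlinarith
        _ = 13824 * ((m:ℝ) + 1) ^ 2 * (((m:ℝ) + 1) * Real.exp (((M:ℝ) - m) * M / (2 * t))) := by
            ring
    calc ((M:ℝ) + 1) ^ 3 ≤ _ := hkey
      _ ≤ 13824 * ((m:ℝ) + 1) ^ 2 *
          ∑ j ∈ Finset.range (M + 1), Real.exp ((j:ℝ) * M / (2 * t)) := by
          have : (0:ℝ) ≤ 13824 * ((m:ℝ) + 1) ^ 2 := by positivity
          exact mul_le_mul_of_nonneg_left hsum this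

private lemma sum_shift_le (g : ℤ → ℝ) (hg : ∀ v, 0 ≤ g v) (M l : ℕ) (b ε : ℤ)
    (hε : ε = 1 ∨ ε = -1)
    (hsub : ∀ r : ℕ, r < l → b + ε * r ∈ Finset.Icc (-(M:ℤ)) M) :
    ∑ r ∈ Finset.range l, g (b + ε * r) ≤ ∑ v ∈ Finset.Icc (-(M:ℤ)) M, g v := by
  have hinj : ∀ r ∈ Finset.range l, ∀ r' ∈ Finset.range l,
      b + ε * r = b + ε * r' → r = r' := by
    intro r _ r' _ h
    rcases hε with h1 | h1 <;> rw [h1] at h <;> omega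
  rw [← Finset.sum_image hinj]
  apply Finset.sum_le_sum_of_subset_of_nonneg
  · intro v hv
    simp only [Finset.mem_image, Finset.mem_range] at hv
    obtain ⟨r, hr, rfl⟩ := hv
    exact hsub r hr
  · intro v _ _; exact hg v

private lemma oneD_uniform (t : ℝ) (ht : 0 < t) (M : ℕ) (a : ℤ) :
    ((min M ⌊Real.sqrt t⌋₊ : ℕ) + 1 : ℝ) * Real.exp (-(1/2)) * Real.exp (-(a:ℝ) ^ 2 / (2 * t)) ≤
      ∑ v ∈ Finset.Icc (-(M:ℤ)) M, Real.exp (-((a:ℝ) - (v:ℝ)) ^ 2 / (2 * t)) := by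
  set m : ℕ := min M ⌊Real.sqrt t⌋₊ with hm
  have hmM : m ≤ M := min_le_left _ _
  have hmt : (m:ℝ) ^ 2 ≤ t := by
    have h1 : (m:ℝ) ≤ Real.sqrt t :=
      le_trans (Nat.cast_le.2 (min_le_right _ _)) (Nat.floor_le (Real.sqrt_nonneg t))
    nlinarith [Real.sq_sqrt ht.le, Real.sqrt_nonneg t]
  have hEa : Real.exp (-(a:ℝ) ^ 2 / (2 * t)) ≤ 1 := by
    rw [show (1:ℝ) = Real.exp 0 by simp]
    apply Real.exp_le_exp.2
    rw [neg_div]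
    have : (0:ℝ) ≤ (a:ℝ) ^ 2 / (2 * t) := by positivity
    linarith
  have hEhalf : Real.exp (-(1/2) : ℝ) ≤ 1 := by
    rw [show (1:ℝ) = Real.exp 0 by simp]
    apply Real.exp_le_exp.2; norm_num
  by_cases hA : |a| ≤ (M:ℤ)
  · set ε : ℤ := if 0 ≤ a then -1 else 1 with hε
    have hεor : ε = 1 ∨ ε = -1 := by rw [hε]; split_ifs <;> simp
    have hsub : ∀ r : ℕ, r < m + 1 → a + ε * r ∈ Finset.Icc (-(M:ℤ)) M := by
      intro r hr
      rw [Finset.mem_Icc]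
      have hrm : (r:ℤ) ≤ m := by exact_mod_cast Nat.lt_succ_iff.1 hr
      have hmMz : (m:ℤ) ≤ M := by exact_mod_cast hmM
      have habs := abs_le.1 hA
      rw [hε]
      split_ifs with h0 <;> constructor <;> omega
    have key := sum_shift_le (fun v => Real.exp (-((a:ℝ) - (v:ℝ)) ^ 2 / (2 * t)))
      (fun v => (Real.exp_pos _).le) M (m + 1) a ε hεor hsub
    refine le_trans ?_ key
    have hterm : ∀ r ∈ Finset.range (m + 1),
        Real.exp (-(1/2) : ℝ) ≤ Real.exp (-((a:ℝ) - ((a + ε * r : ℤ) : ℝ)) ^ 2 / (2 * t)) := by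
      intro r hr
      apply Real.exp_le_exp.2
      have hrm : (r:ℝ) ≤ (m:ℝ) := by
        exact_mod_cast Nat.lt_succ_iff.1 (Finset.mem_range.1 hr)
      have hr0 : (0:ℝ) ≤ (r:ℝ) := Nat.cast_nonneg r
      have hsq : ((a:ℝ) - ((a + ε * r : ℤ) : ℝ)) ^ 2 = (r:ℝ) ^ 2 := by
        push_cast
        rcases hεor with h1 | h1 <;> rw [h1] <;> push_cast <;> ring
      rw [hsq]
      have hrt : (r:ℝ) ^ 2 ≤ t := by nlinarith
      have h2t : (0:ℝ) < 2 * t := by linarith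
      have hhalf : (r:ℝ) ^ 2 / (2 * t) ≤ 1 / 2 := by
        rw [div_le_div_iff₀ h2t (by norm_num)]; linarith
      rw [neg_div]
      linarith
    calc ((m:ℕ) + 1 : ℝ) * Real.exp (-(1/2)) * Real.exp (-(a:ℝ) ^ 2 / (2 * t))
        ≤ ((m:ℕ) + 1 : ℝ) * Real.exp (-(1/2)) * 1 := by
          apply mul_le_mul_of_nonneg_left hEa (by positivity)
      _ = ∑ _r ∈ Finset.range (m + 1), Real.exp (-(1/2) : ℝ) := by
          rw [Finset.sum_const, Finset.card_range, nsmul_eq_mul]; push_cast; ring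
      _ ≤ ∑ r ∈ Finset.range (m + 1), Real.exp (-((a:ℝ) - ((a + ε * r : ℤ) : ℝ)) ^ 2 / (2 * t)) :=
          Finset.sum_le_sum hterm
  · push_neg at hA
    set ε : ℤ := if 0 ≤ a then 1 else -1 with hε
    have hεor : ε = 1 ∨ ε = -1 := by rw [hε]; split_ifs <;> simp
    have hsub : ∀ r : ℕ, r < M + 1 → 0 + ε * r ∈ Finset.Icc (-(M:ℤ)) M := by
      intro r hr
      rw [Finset.mem_Icc]
      have hrm : (r:ℤ) ≤ M := by exact_mod_cast Nat.lt_succ_iff.1 hr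
      rw [hε]; split_ifs <;> constructor <;> omega
    have key := sum_shift_le (fun v => Real.exp (-((a:ℝ) - (v:ℝ)) ^ 2 / (2 * t)))
      (fun v => (Real.exp_pos _).le) M (M + 1) 0 ε hεor hsub
    refine le_trans ?_ key
    have hterm : ∀ r ∈ Finset.range (M + 1),
        Real.exp (-(a:ℝ) ^ 2 / (2 * t)) ≤
          Real.exp (-((a:ℝ) - ((0 + ε * r : ℤ) : ℝ)) ^ 2 / (2 * t)) := by
      intro r hr
      apply Real.exp_le_exp.2
      have hsq : ((a:ℤ) - (0 + ε * r)) ^ 2 ≤ a ^ 2 := by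
        have hrm : (r:ℤ) ≤ M := by exact_mod_cast Nat.lt_succ_iff.1 (Finset.mem_range.1 hr)
        have hr0 : (0:ℤ) ≤ (r:ℤ) := Int.natCast_nonneg r
        rw [hε]
        rcases le_or_gt 0 a with h0 | h0
        · rw [if_pos h0, abs_of_nonneg h0] at *
          nlinarith
        · rw [if_neg (not_le.2 h0), abs_of_neg h0] at *
          nlinarith
      have hsqR : ((a:ℝ) - ((0 + ε * r : ℤ) : ℝ)) ^ 2 ≤ (a:ℝ) ^ 2 := by
        have h : (((a - (0 + ε * (r:ℤ))) ^ 2 : ℤ) : ℝ) ≤ ((a ^ 2 : ℤ) : ℝ) := Int.cast_le.mpr hsq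
        push_cast at h ⊢
        convert h using 2 <;> push_cast <;> ring
      have h2t : (0:ℝ) < 2 * t := by linarith
      apply div_le_div_of_nonneg_right (by linarith) h2t.le
    calc ((m:ℕ) + 1 : ℝ) * Real.exp (-(1/2)) * Real.exp (-(a:ℝ) ^ 2 / (2 * t))
        ≤ ((M:ℕ) + 1 : ℝ) * 1 * Real.exp (-(a:ℝ) ^ 2 / (2 * t)) := by
          apply mul_le_mul_of_nonneg_right _ (Real.exp_pos _).le
          apply mul_le_mul (by exact_mod_cast Nat.succ_le_succ hmM) hEhalf
            (Real.exp_pos _).le (by positivity)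
      _ = ∑ _r ∈ Finset.range (M + 1), Real.exp (-(a:ℝ) ^ 2 / (2 * t)) := by
          rw [Finset.sum_const, Finset.card_range, nsmul_eq_mul]; push_cast; ring
      _ ≤ ∑ r ∈ Finset.range (M + 1),
            Real.exp (-((a:ℝ) - ((0 + ε * r : ℤ) : ℝ)) ^ 2 / (2 * t)) :=
          Finset.sum_le_sum hterm

private lemma oneD_max (t : ℝ) (ht : 0 < t) (M : ℕ) (a : ℤ) (ha : (M:ℤ) ≤ |a|) :
    (∑ j ∈ Finset.range (M + 1), Real.exp ((j:ℝ) * M / (2 * t))) *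
        Real.exp (-(a:ℝ) ^ 2 / (2 * t)) ≤
      ∑ v ∈ Finset.Icc (-(M:ℤ)) M, Real.exp (-((a:ℝ) - (v:ℝ)) ^ 2 / (2 * t)) := by
  set ε : ℤ := if 0 ≤ a then 1 else -1 with hε
  have hεor : ε = 1 ∨ ε = -1 := by rw [hε]; split_ifs <;> simp
  have hsub : ∀ r : ℕ, r < M + 1 → 0 + ε * r ∈ Finset.Icc (-(M:ℤ)) M := by
    intro r hr
    rw [Finset.mem_Icc]
    have hrm : (r:ℤ) ≤ M := by exact_mod_cast Nat.lt_succ_iff.1 hr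
    rw [hε]; split_ifs <;> constructor <;> omega
  have key := sum_shift_le (fun v => Real.exp (-((a:ℝ) - (v:ℝ)) ^ 2 / (2 * t)))
    (fun v => (Real.exp_pos _).le) M (M + 1) 0 ε hεor hsub
  refine le_trans ?_ key
  rw [Finset.sum_mul]
  refine Finset.sum_le_sum fun j hj => ?_
  rw [← Real.exp_add]
  apply Real.exp_le_exp.2
  have hjm : (j:ℤ) ≤ M := by exact_mod_cast Nat.lt_succ_iff.1 (Finset.mem_range.1 hj)
  have hj0 : (0:ℤ) ≤ (j:ℤ) := Int.natCast_nonneg j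
  -- key integer inequality: (a - ε j)^2 ≤ a^2 - j * M
  have hsq : (a - (0 + ε * j)) ^ 2 ≤ a ^ 2 - j * M := by
    rw [hε]
    rcases le_or_gt 0 a with h0 | h0
    · rw [if_pos h0, abs_of_nonneg h0] at *
      nlinarith
    · rw [if_neg (not_le.2 h0), abs_of_neg h0] at *
      nlinarith
  have hsqR : ((a:ℝ) - ((0 + ε * j : ℤ) : ℝ)) ^ 2 ≤ (a:ℝ) ^ 2 - (j:ℝ) * M := by
    have h : (((a - (0 + ε * (j:ℤ))) ^ 2 : ℤ) : ℝ) ≤ ((a ^ 2 - j * M : ℤ) : ℝ) :=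
      Int.cast_le.mpr hsq
    push_cast at h ⊢
    convert h using 2
  have h2t : (0:ℝ) < 2 * t := by linarith
  have : (j:ℝ) * M / (2 * t) + -(a:ℝ) ^ 2 / (2 * t) = -((a:ℝ) ^ 2 - (j:ℝ) * M) / (2 * t) := by
    ring
  rw [this]
  apply div_le_div_of_nonneg_right (by linarith) h2t.le

set_option maxHeartbeats 2000000 in
theorem gauss_point_le_ball_sum (β C₁ : ℝ) (hβ : 0 < β) (hC₁ : 0 < C₁) :
    ∃ C₃ > (0 : ℝ), ∀ k n : ℕ, 1 ≤ k → 1 ≤ n → ∀ x y : Fin 3 → ℤ,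
      C₁ * (k : ℝ) ^ ((1 : ℝ) / 6) ≤ latNorm (x - y) →
      Real.sqrt k * gauss 3 n (β • toRealVec (x - y)) ≤
        C₃ * ∑' z : Fin 3 → ℤ,
          if latNorm (z - y) ≤ C₁ * (k : ℝ) ^ ((1 : ℝ) / 6) then
            gauss 3 n (β • toRealVec (x - z))
          else 0 := by
  refine ⟨3 * Real.sqrt 3 * 13824 * Real.exp 1 / C₁ ^ 3,
    div_pos (by positivity) (pow_pos hC₁ 3), ?_⟩
  intro k n hk hn x y hfar
  set R : ℝ := C₁ * (k:ℝ) ^ ((1:ℝ)/6) with hR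
  have hk1 : (1:ℝ) ≤ (k:ℝ) := by exact_mod_cast hk
  have hkpow : (0:ℝ) < (k:ℝ) ^ ((1:ℝ)/6) := Real.rpow_pos_of_pos (by linarith) _
  have hR0 : 0 < R := by rw [hR]; positivity
  have hn0 : (0:ℝ) < (n:ℝ) := by exact_mod_cast hn
  set t : ℝ := (n:ℝ) / β ^ 2 with htdef
  have ht : 0 < t := by rw [htdef]; positivity
  set M : ℕ := ⌊R / Real.sqrt 3⌋₊ with hMdef
  have hs3 : (0:ℝ) < Real.sqrt 3 := Real.sqrt_pos.2 (by norm_num)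
  have hMle : Real.sqrt 3 * (M:ℝ) ≤ R := by
    have h1 : (M:ℝ) ≤ R / Real.sqrt 3 := Nat.floor_le (by positivity)
    rw [le_div_iff₀ hs3] at h1
    linarith [h1]
  have hMgt : R < Real.sqrt 3 * ((M:ℝ) + 1) := by
    have h1 : R / Real.sqrt 3 < (M:ℝ) + 1 := Nat.lt_floor_add_one _
    rw [div_lt_iff₀ hs3] at h1
    linarith [h1]
  set a : Fin 3 → ℤ := x - y with ha
  set A : ℝ := (2 * Real.pi * (n:ℝ)) ^ (-(3:ℝ)/2) with hA
  have hA0 : 0 < A := Real.rpow_pos_of_pos (by positivity) _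
  -- rewriting the gaussian as a product
  have gauss_eq : ∀ w : Fin 3 → ℤ, gauss 3 (n:ℝ) (β • toRealVec w)
      = A * ∏ i, Real.exp (-((w i : ℝ)) ^ 2 / (2 * t)) := by
    intro w
    have h1 : ∑ i, ((β • toRealVec w) i) ^ 2 = β ^ 2 * ∑ i, ((w i : ℝ)) ^ 2 := by
      rw [Finset.mul_sum]
      refine Finset.sum_congr rfl fun i _ => ?_
      simp only [toRealVec, Pi.smul_apply, smul_eq_mul]
      ring
    have h2 : -(β ^ 2 * ∑ i, ((w i : ℝ)) ^ 2) / (2 * (n:ℝ))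
        = ∑ i, (-((w i : ℝ)) ^ 2 / (2 * t)) := by
      rw [← Finset.sum_div]
      have hsum : ∑ i, (-((w i:ℝ)) ^ 2) = -(∑ i, ((w i:ℝ)) ^ 2) := by
        rw [Finset.sum_neg_distrib]
      rw [hsum, htdef]
      field_simp
    simp only [gauss, Nat.cast_ofNat]
    rw [h1, h2, Real.exp_sum, hA]
  -- far point: sum of squares is at least R^2
  have hsumnn : (0:ℝ) ≤ ∑ i, ((a i : ℝ)) ^ 2 := by positivity
  have hsum_ge : R ^ 2 ≤ ∑ i, ((a i : ℝ)) ^ 2 := by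
    have h := hfar
    rw [latNorm] at h
    nlinarith [Real.sq_sqrt hsumnn, Real.sqrt_nonneg (∑ i, ((a i:ℝ)) ^ 2)]
  -- max coordinate
  obtain ⟨i0, hi0⟩ : ∃ i, (M:ℤ) ≤ |a i| := by
    by_contra hcon
    push_neg at hcon
    have hlt : ∀ i, ((a i : ℝ)) ^ 2 < (M:ℝ) ^ 2 := by
      intro i
      have h1 : |a i| ≤ (M:ℤ) - 1 := by have := hcon i; omega
      have h3 : |(a i : ℝ)| ≤ (M:ℝ) - 1 := by
        rw [← Int.cast_abs]; exact_mod_cast h1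
      nlinarith [abs_nonneg ((a i : ℝ)), sq_abs ((a i : ℝ))]
    have hsum_lt : ∑ i, ((a i:ℝ)) ^ 2 < 3 * (M:ℝ) ^ 2 := by
      rw [Fin.sum_univ_three]
      linarith [hlt 0, hlt 1, hlt 2]
    have h3M : 3 * (M:ℝ) ^ 2 ≤ R ^ 2 := by
      nlinarith [hMle, Real.sq_sqrt (by norm_num : (0:ℝ) ≤ 3), hs3, Nat.cast_nonneg (α := ℝ) M,
        mul_nonneg (mul_nonneg hs3.le (Nat.cast_nonneg (α := ℝ) M)) (by linarith [hMle] : (0:ℝ) ≤ R - Real.sqrt 3 * M)]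
    linarith
  -- the summand function
  set f : (Fin 3 → ℤ) → ℝ := fun z =>
    if latNorm (z - y) ≤ R then gauss 3 (n:ℝ) (β • toRealVec (x - z)) else 0 with hf
  have hf_nonneg : ∀ z, 0 ≤ f z := by
    intro z
    rw [hf]
    dsimp only
    split_ifs
    · rw [gauss_eq]
      exact mul_nonneg hA0.le (Finset.prod_nonneg fun i _ => (Real.exp_pos _).le)
    · exact le_refl 0
  -- summability via finite support
  have hsummable : Summable f := by
    apply summable_of_ne_finset_zero
      (s := Fintype.piFinset fun i => Finset.Icc (y i - ⌈R⌉) (y i + ⌈R⌉))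
    intro z hz
    rw [hf]
    dsimp only
    rw [if_neg]
    intro hcond
    apply hz
    rw [Fintype.mem_piFinset]
    intro i
    rw [Finset.mem_Icc]
    have hS : ∑ j, (((z - y) j : ℝ)) ^ 2 ≤ R ^ 2 := by
      rw [latNorm] at hcond
      nlinarith [Real.sq_sqrt (show (0:ℝ) ≤ ∑ j, (((z - y) j:ℝ)) ^ 2 by positivity),
        Real.sqrt_nonneg (∑ j, (((z - y) j:ℝ)) ^ 2), hR0]
    have h1 : (((z - y) i : ℝ)) ^ 2 ≤ R ^ 2 :=
      le_trans (Finset.single_le_sum (f := fun j => (((z - y) j : ℝ)) ^ 2)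
        (fun j _ => sq_nonneg _) (Finset.mem_univ i)) hS
    have h2 : |((z - y) i : ℝ)| ≤ R := by
      rw [← Real.sqrt_sq_eq_abs]
      calc Real.sqrt ((((z - y) i : ℝ)) ^ 2) ≤ Real.sqrt (R ^ 2) := Real.sqrt_le_sqrt h1
        _ = R := Real.sqrt_sq hR0.le
    have h3 : |(z - y) i| ≤ ⌈R⌉ := by
      have h4 : ((|(z - y) i| : ℤ) : ℝ) ≤ ((⌈R⌉ : ℤ) : ℝ) := by
        rw [Int.cast_abs]
        exact le_trans h2 (Int.le_ceil R)
      exact_mod_cast h4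
    have h5 := abs_le.1 h3
    simp only [Pi.sub_apply] at h5
    omega
  -- the cube of lattice points
  set B : Finset (Fin 3 → ℤ) := Fintype.piFinset fun _ : Fin 3 => Finset.Icc (-(M:ℤ)) M with hB
  have hZsum : ∑ z ∈ B.image (fun v => y + v), f z = ∑ v ∈ B, f (y + v) :=
    Finset.sum_image (by intro v _ v' _ h; exact add_left_cancel h)
  have hball : ∀ v ∈ B, latNorm ((y + v) - y) ≤ R := by
    intro v hv
    rw [add_sub_cancel_left, latNorm]
    have hcoord : ∀ i, ((v i : ℝ)) ^ 2 ≤ (M:ℝ) ^ 2 := by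
      intro i
      have h := Fintype.mem_piFinset.1 hv i
      rw [Finset.mem_Icc] at h
      have h1 : |(v i : ℝ)| ≤ (M:ℝ) := by
        rw [← Int.cast_abs]
        exact_mod_cast abs_le.2 h
      nlinarith [abs_nonneg ((v i:ℝ)), sq_abs ((v i:ℝ))]
    have hsum3 : ∑ i, ((v i:ℝ)) ^ 2 ≤ 3 * (M:ℝ) ^ 2 := by
      rw [Fin.sum_univ_three]
      linarith [hcoord 0, hcoord 1, hcoord 2]
    calc Real.sqrt (∑ i, ((v i:ℝ)) ^ 2) ≤ Real.sqrt (3 * (M:ℝ) ^ 2) := Real.sqrt_le_sqrt hsum3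
      _ = Real.sqrt 3 * (M:ℝ) := by
          rw [Real.sqrt_mul (by norm_num : (0:ℝ) ≤ 3), Real.sqrt_sq (Nat.cast_nonneg M)]
      _ ≤ R := hMle
  have hfB : ∀ v ∈ B, f (y + v)
      = A * ∏ i, Real.exp (-((a i : ℝ) - (v i : ℝ)) ^ 2 / (2 * t)) := by
    intro v hv
    rw [hf]
    dsimp only
    rw [if_pos (hball v hv)]
    have hxyz : x - (y + v) = a - v := by rw [ha]; abel
    rw [hxyz, gauss_eq]
    congr 1
    refine Finset.prod_congr rfl fun i _ => ?_
    congr 1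
    rw [Pi.sub_apply]
    push_cast
    ring
  -- product formula
  have hprod : ∏ i : Fin 3, ∑ w ∈ Finset.Icc (-(M:ℤ)) M,
        Real.exp (-((a i:ℝ) - (w:ℝ)) ^ 2 / (2 * t))
      = ∑ v ∈ B, ∏ i, Real.exp (-((a i:ℝ) - (v i:ℝ)) ^ 2 / (2 * t)) :=
    Finset.prod_univ_sum _ _
  -- lower bound for the product of one-dimensional sums
  have hmax := oneD_max t ht M (a i0) hi0
  have huni := fun i => oneD_uniform t ht M (a i)
  set G : ℝ := ∑ j ∈ Finset.range (M + 1), Real.exp ((j:ℝ) * M / (2 * t)) with hG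
  have hG0 : 0 < G := by
    rw [hG]
    exact Finset.sum_pos (fun j _ => Real.exp_pos _) (by simp)
  set S : Fin 3 → ℝ := fun i => ∑ w ∈ Finset.Icc (-(M:ℤ)) M,
    Real.exp (-((a i:ℝ) - (w:ℝ)) ^ 2 / (2 * t)) with hSdef
  have hprod_ge : G * (((min M ⌊Real.sqrt t⌋₊ : ℕ) : ℝ) + 1) ^ 2 * Real.exp (-1) *
      ∏ i, Real.exp (-(a i:ℝ) ^ 2 / (2 * t)) ≤ ∏ i, S i := by
    rw [← Finset.mul_prod_erase Finset.univ S (Finset.mem_univ i0),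
        ← Finset.mul_prod_erase Finset.univ (fun i => Real.exp (-(a i:ℝ) ^ 2 / (2 * t)))
          (Finset.mem_univ i0)]
    have hcard : (Finset.univ.erase i0).card = 2 := by
      rw [Finset.card_erase_of_mem (Finset.mem_univ i0)]
      simp
    have herase : ((((min M ⌊Real.sqrt t⌋₊ : ℕ) : ℝ) + 1) * Real.exp (-(1/2))) ^ 2 *
        ∏ i ∈ Finset.univ.erase i0, Real.exp (-(a i:ℝ) ^ 2 / (2 * t))
        ≤ ∏ i ∈ Finset.univ.erase i0, S i := by
      calc ((((min M ⌊Real.sqrt t⌋₊ : ℕ) : ℝ) + 1) * Real.exp (-(1/2))) ^ 2 *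
          ∏ i ∈ Finset.univ.erase i0, Real.exp (-(a i:ℝ) ^ 2 / (2 * t))
          = ∏ i ∈ Finset.univ.erase i0,
              ((((min M ⌊Real.sqrt t⌋₊ : ℕ) : ℝ) + 1) * Real.exp (-(1/2)) *
                Real.exp (-(a i:ℝ) ^ 2 / (2 * t))) := by
            rw [Finset.prod_mul_distrib, Finset.prod_const, hcard]
        _ ≤ ∏ i ∈ Finset.univ.erase i0, S i :=
            Finset.prod_le_prod (fun i _ => by positivity) (fun i _ => huni i)
    have hmax' : G * Real.exp (-(a i0:ℝ) ^ 2 / (2 * t)) ≤ S i0 := hmax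
    have hexp2 : Real.exp (-(1/2) : ℝ) ^ 2 = Real.exp (-1) := by
      rw [← Real.exp_nat_mul]
      norm_num
    have hnn1 : (0:ℝ) ≤ G * Real.exp (-(a i0:ℝ) ^ 2 / (2 * t)) := by positivity
    have hnn2 : (0:ℝ) ≤ ((((min M ⌊Real.sqrt t⌋₊ : ℕ) : ℝ) + 1) * Real.exp (-(1/2))) ^ 2 *
        ∏ i ∈ Finset.univ.erase i0, Real.exp (-(a i:ℝ) ^ 2 / (2 * t)) := by positivity
    calc G * (((min M ⌊Real.sqrt t⌋₊ : ℕ) : ℝ) + 1) ^ 2 * Real.exp (-1) *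
        (Real.exp (-(a i0:ℝ) ^ 2 / (2 * t)) *
          ∏ i ∈ Finset.univ.erase i0, Real.exp (-(a i:ℝ) ^ 2 / (2 * t)))
        = (G * Real.exp (-(a i0:ℝ) ^ 2 / (2 * t))) *
          (((((min M ⌊Real.sqrt t⌋₊ : ℕ) : ℝ) + 1) * Real.exp (-(1/2))) ^ 2 *
            ∏ i ∈ Finset.univ.erase i0, Real.exp (-(a i:ℝ) ^ 2 / (2 * t))) := by
          rw [← hexp2]; ring
      _ ≤ S i0 * ∏ i ∈ Finset.univ.erase i0, S i := by
          apply mul_le_mul hmax' herase hnn2 (le_trans hnn1 hmax')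
  -- tsum lower bound
  have htsum_ge : A * ∏ i, S i ≤ ∑' z, f z := by
    calc A * ∏ i, S i = ∑ v ∈ B, f (y + v) := by
          rw [hSdef]
          dsimp only
          rw [hprod, Finset.mul_sum]
          exact (Finset.sum_congr rfl hfB).symm
      _ = ∑ z ∈ B.image (fun v => y + v), f z := hZsum.symm
      _ ≤ ∑' z, f z := Summable.sum_le_tsum _ (fun z _ => hf_nonneg z) hsummable
  -- numeric lemma
  have hnum := numeric_lemma M t ht
  -- sqrt k bound
  have hkpow3 : ((k:ℝ) ^ ((1:ℝ)/6)) ^ (3:ℕ) = Real.sqrt k := by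
    rw [← Real.rpow_natCast ((k:ℝ) ^ ((1:ℝ)/6)) 3, ← Real.rpow_mul (Nat.cast_nonneg k),
      Real.sqrt_eq_rpow]
    norm_num
  have hRk : R ^ 3 = C₁ ^ 3 * Real.sqrt k := by
    rw [hR, mul_pow, hkpow3]
  have hsqrt3cube : (Real.sqrt 3) ^ 3 = 3 * Real.sqrt 3 := by
    nlinarith [Real.sq_sqrt (by norm_num : (0:ℝ) ≤ 3), hs3]
  have hC3 : (0:ℝ) < C₁ ^ 3 := pow_pos hC₁ 3
  have hsqrtk : Real.sqrt (k:ℝ) ≤ 3 * Real.sqrt 3 * ((M:ℝ) + 1) ^ 3 / C₁ ^ 3 := by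
    rw [le_div_iff₀ hC3]
    calc Real.sqrt (k:ℝ) * C₁ ^ 3 = R ^ 3 := by rw [hRk]; ring
      _ ≤ (Real.sqrt 3 * ((M:ℝ) + 1)) ^ 3 := pow_le_pow_left₀ hR0.le hMgt.le 3
      _ = 3 * Real.sqrt 3 * ((M:ℝ) + 1) ^ 3 := by rw [mul_pow, hsqrt3cube]
  -- final chain
  have hP : gauss 3 (n:ℝ) (β • toRealVec a) = A * ∏ i, Real.exp (-(a i:ℝ) ^ 2 / (2 * t)) :=
    gauss_eq a
  have hPnn : (0:ℝ) ≤ A * ∏ i, Real.exp (-(a i:ℝ) ^ 2 / (2 * t)) :=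
    mul_nonneg hA0.le (Finset.prod_nonneg fun i _ => (Real.exp_pos _).le)
  have hT : A * (G * (((min M ⌊Real.sqrt t⌋₊ : ℕ) : ℝ) + 1) ^ 2 * Real.exp (-1) *
      ∏ i, Real.exp (-(a i:ℝ) ^ 2 / (2 * t))) ≤ ∑' z, f z :=
    le_trans (mul_le_mul_of_nonneg_left hprod_ge hA0.le) htsum_ge
  rw [hP]
  calc Real.sqrt (k:ℝ) * (A * ∏ i, Real.exp (-(a i:ℝ) ^ 2 / (2 * t)))
      ≤ (3 * Real.sqrt 3 * ((M:ℝ) + 1) ^ 3 / C₁ ^ 3) *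
        (A * ∏ i, Real.exp (-(a i:ℝ) ^ 2 / (2 * t))) :=
        mul_le_mul_of_nonneg_right hsqrtk hPnn
    _ ≤ (3 * Real.sqrt 3 * (13824 * (((min M ⌊Real.sqrt t⌋₊ : ℕ) : ℝ) + 1) ^ 2 * G) / C₁ ^ 3) *
        (A * ∏ i, Real.exp (-(a i:ℝ) ^ 2 / (2 * t))) := by
        apply mul_le_mul_of_nonneg_right _ hPnn
        apply div_le_div_of_nonneg_right _ hC3.le
        have h3s : (0:ℝ) ≤ 3 * Real.sqrt 3 := by positivity
        calc 3 * Real.sqrt 3 * ((M:ℝ) + 1) ^ 3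
            ≤ 3 * Real.sqrt 3 * (13824 * (((min M ⌊Real.sqrt t⌋₊ : ℕ) : ℝ) + 1) ^ 2 * (∑ j ∈ Finset.range (M + 1), Real.exp ((j:ℝ) * M / (2 * t)))) :=
              mul_le_mul_of_nonneg_left hnum h3s
          _ = 3 * Real.sqrt 3 * (13824 * (((min M ⌊Real.sqrt t⌋₊ : ℕ) : ℝ) + 1) ^ 2 * G) := by
              rw [hG]
    _ = (3 * Real.sqrt 3 * 13824 * Real.exp 1 / C₁ ^ 3) *
        (A * (G * (((min M ⌊Real.sqrt t⌋₊ : ℕ) : ℝ) + 1) ^ 2 * Real.exp (-1) *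
          ∏ i, Real.exp (-(a i:ℝ) ^ 2 / (2 * t)))) := by
        rw [Real.exp_neg]
        have he := Real.exp_ne_zero 1
        field_simp
    _ ≤ (3 * Real.sqrt 3 * 13824 * Real.exp 1 / C₁ ^ 3) * ∑' z, f z := by
        apply mul_le_mul_of_nonneg_left hT
        positivity
end
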